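/- arXiv:0906.3652 — 8 statements merged into one kernel-verified Lean document; each statement's English description precedes it below -/
import Mathlib

section
/- For every integer N ≥ 1, the following identity holds: 1 + Σ_{t=1}^{N} Σ_{s=1}^{⌊t/2⌋} C(N-t+s, s) · C(t-s-1, s-1) · 2^{-(t-s)} = (3/2)^{N-1}. (This is the normalizing constant C_N of the averaged generating function for coloured hard-dimers evaluated at u=v=w=1.) -/
/-- Vandermonde-style identity: for `1 ≤ m ≤ N - 1`,
`C(N-1, m) = ∑_{s=1}^{m} C(N-m, s) * C(m-1, s-1)`. -/
lemma vdm_aux (N m : ℕ) (hm1 : 1 ≤ m) (hmN : m ≤ N - 1) (hN : 1 ≤ N) :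
    ((N - 1).choose m : ℕ) =
      ∑ s ∈ Finset.Icc 1 m, (N - m).choose s * (m - 1).choose (s - 1) := by
  have hNm : N - 1 = (N - m) + (m - 1) := by omega
  rw [hNm, Nat.add_choose_eq, Finset.Nat.sum_antidiagonal_eq_sum_range_succ_mk]
  have hrange : Finset.range (m + 1) = insert 0 (Finset.Icc 1 m) := by
    ext x
    simp [Finset.mem_Icc, Finset.mem_range]
    omega
  rw [hrange, Finset.sum_insert (by simp)]
  have h0 : (m - 1).choose (m - 0) = 0 := by
    rw [Nat.sub_zero]; exact Nat.choose_eq_zero_of_lt (by omega)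
  rw [h0, mul_zero, zero_add]
  apply Finset.sum_congr rfl
  intro s hs
  simp only [Finset.mem_Icc] at hs
  congr 1
  rw [← Nat.choose_symm (by omega : m - s ≤ m - 1)]
  congr 1
  omega

/-- For every integer N ≥ 1,
`1 + Σ_{t=1}^{N} Σ_{s=1}^{⌊t/2⌋} C(N-t+s, s) · C(t-s-1, s-1) · 2^{-(t-s)} = (3/2)^{N-1}`. -/
theorem normalizing_constant (N : ℕ) (hN : 1 ≤ N) :
    1 + ∑ t ∈ Finset.Icc 1 N, ∑ s ∈ Finset.Icc 1 (t / 2),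
        (((N - t + s).choose s : ℝ) * ((t - s - 1).choose (s - 1)) * (1 / 2 : ℝ) ^ (t - s))
      = (3 / 2 : ℝ) ^ (N - 1) := by
  -- Binomial theorem for the RHS
  have h1 : ((3 : ℝ) / 2) ^ (N - 1)
      = ∑ m ∈ Finset.range N, ((N - 1).choose m : ℝ) * (1 / 2 : ℝ) ^ m := by
    have h32 : (3 : ℝ) / 2 = 1 / 2 + 1 := by norm_num
    rw [h32, add_pow]
    rw [show N - 1 + 1 = N by omega]
    apply Finset.sum_congr rfl
    intro k _
    ring
  have hrange : Finset.range N = insert 0 (Finset.Icc 1 (N - 1)) := by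
    ext x
    simp [Finset.mem_Icc, Finset.mem_range]
    omega
  rw [h1, hrange, Finset.sum_insert (by simp)]
  simp only [Nat.choose_zero_right, Nat.cast_one, pow_zero, mul_one, one_mul]
  congr 1
  -- Now prove the double-sum identity
  -- First insert Vandermonde into the RHS
  have h2 : ∑ m ∈ Finset.Icc 1 (N - 1), ((N - 1).choose m : ℝ) * (1 / 2 : ℝ) ^ m
      = ∑ m ∈ Finset.Icc 1 (N - 1), ∑ s ∈ Finset.Icc 1 m,
          (((N - m).choose s : ℝ) * ((m - 1).choose (s - 1)) * (1 / 2 : ℝ) ^ m) := by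
    apply Finset.sum_congr rfl
    intro m hm
    simp only [Finset.mem_Icc] at hm
    rw [vdm_aux N m hm.1 hm.2 hN]
    push_cast
    rw [Finset.sum_mul]
  rw [h2]
  -- Convert both to sigma sums
  rw [Finset.sum_sigma' (Finset.Icc 1 N) (fun t => Finset.Icc 1 (t / 2))
      (fun t s => (((N - t + s).choose s : ℝ) * ((t - s - 1).choose (s - 1))
        * (1 / 2 : ℝ) ^ (t - s)))]
  rw [Finset.sum_sigma' (Finset.Icc 1 (N - 1)) (fun m => Finset.Icc 1 m)
      (fun m s => (((N - m).choose s : ℝ) * ((m - 1).choose (s - 1)) * (1 / 2 : ℝ) ^ m))]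
  -- Restrict the RHS sigma sum to pairs with m + s ≤ N (other terms are zero)
  rw [← Finset.sum_filter_of_ne
      (s := (Finset.Icc 1 (N - 1)).sigma (fun m => Finset.Icc 1 m))
      (p := fun x : Σ _ : ℕ, ℕ => x.1 + x.2 ≤ N)
      (f := fun x : Σ _ : ℕ, ℕ => (((N - x.1).choose x.2 : ℝ)
        * ((x.1 - 1).choose (x.2 - 1)) * (1 / 2 : ℝ) ^ x.1))
      (by
        rintro ⟨m, s⟩ hx hne
        simp only [Finset.mem_sigma, Finset.mem_Icc] at hx
        by_contra hle
        have hle' : ¬ m + s ≤ N := hle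
        apply hne
        have hms : N - m < s := by omega
        simp [Nat.choose_eq_zero_of_lt hms])]
  -- Bijection (t, s) ↦ (t - s, s)
  refine Finset.sum_nbij' (fun x : Σ _ : ℕ, ℕ => (⟨x.1 - x.2, x.2⟩ : Σ _ : ℕ, ℕ))
    (fun x : Σ _ : ℕ, ℕ => (⟨x.1 + x.2, x.2⟩ : Σ _ : ℕ, ℕ)) ?_ ?_ ?_ ?_ ?_
  · rintro ⟨t, s⟩ hx
    simp only [Finset.mem_sigma, Finset.mem_Icc] at hx
    simp only [Finset.mem_filter, Finset.mem_sigma, Finset.mem_Icc]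
    omega
  · rintro ⟨m, s⟩ hx
    simp only [Finset.mem_filter, Finset.mem_sigma, Finset.mem_Icc] at hx
    simp only [Finset.mem_sigma, Finset.mem_Icc]
    omega
  · rintro ⟨t, s⟩ hx
    simp only [Finset.mem_sigma, Finset.mem_Icc] at hx
    have : t - s + s = t := by omega
    simp [this]
  · rintro ⟨m, s⟩ hx
    simp only [Finset.mem_filter, Finset.mem_sigma, Finset.mem_Icc] at hx
    have : m + s - s = m := by omega
    simp [this]
  · rintro ⟨t, s⟩ hx
    simp only [Finset.mem_sigma, Finset.mem_Icc] at hx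
    have e1 : N - (t - s) = N - t + s := by omega
    simp only [e1]
end

section
/- For every integer N ≥ 1 and every integer k with 1 ≤ k ≤ N, one has Σ_{s≥0} P̃_N(s, N-k+s) = C(N-1, k-1) · (2/3)^{k-1} · (1/3)^{N-k}. In other words, the random variable n_b+n_r+γ_b+γ_r (the total number of dimers and single points, equal to k = N-t+s) has, after shifting by 1, the binomial distribution B(N-1, 2/3). -/
/-- The hard-dimer probability weights `P̃_N(s,t)`:
`P̃_N(0,0) = (2/3)^{N-1}`,
`P̃_N(s,t) = (2/3)^{N-1} · C(N-t+s, s) · C(t-s-1, s-1) · 2^{-(t-s)}`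
for `1 ≤ s ≤ ⌊t/2⌋` and `1 ≤ t ≤ N`, and `P̃_N(s,t) = 0` otherwise. -/
noncomputable def Ptilde (N s t : ℕ) : ℝ :=
  if s = 0 ∧ t = 0 then (2 / 3 : ℝ) ^ (N - 1)
  else if 1 ≤ s ∧ s ≤ t / 2 ∧ 1 ≤ t ∧ t ≤ N then
    (2 / 3 : ℝ) ^ (N - 1) * ((N - t + s).choose s : ℝ)
      * ((t - s - 1).choose (s - 1) : ℝ) * (1 / 2 : ℝ) ^ (t - s)
  else 0

lemma vdm (m n : ℕ) :
    ∑ j ∈ Finset.range (n + 1), (m + 1).choose (j + 1) * n.choose j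
      = (m + n + 1).choose m := by
  have h := Nat.add_choose_eq (m + 1) n (n + 1)
  rw [Finset.Nat.sum_antidiagonal_eq_sum_range_succ_mk, Finset.sum_range_succ'] at h
  simp only [Nat.choose_zero_right, one_mul, Nat.sub_zero, Nat.choose_succ_self, mul_zero,
    add_zero, Nat.succ_sub_succ] at h
  have h2 : (m + n + 1).choose (n + 1) = (m + n + 1).choose m := by
    have := Nat.choose_symm (show n + 1 ≤ m + n + 1 by omega)
    rw [show m + n + 1 - (n + 1) = m by omega] at this; exact this.symm
  rw [show m + 1 + n = m + n + 1 by ring] at h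
  rw [← h2, h]
  refine Finset.sum_congr rfl fun j hj => ?_
  simp only [Finset.mem_range] at hj
  have := Nat.choose_symm (show n - j ≤ n by omega)
  rw [show n - (n - j) = j by omega] at this
  rw [this]

/-- the total number of dimers and single points `k = N-t+s` has,
after shifting by 1, the binomial distribution `B(N-1, 2/3)`. -/
theorem dimers_and_single_points_binomial (N k : ℕ) (hN : 1 ≤ N) (hk1 : 1 ≤ k) (hkN : k ≤ N) :
    ∑' s : ℕ, Ptilde N s (N - k + s)
      = ((N - 1).choose (k - 1) : ℝ) * (2 / 3 : ℝ) ^ (k - 1) * (1 / 3 : ℝ) ^ (N - k) := by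
  have hz : ∀ s ∉ Finset.range (N + 1), Ptilde N s (N - k + s) = 0 := by
    intro s hs
    simp only [Finset.mem_range, not_lt] at hs
    unfold Ptilde
    rw [if_neg (by omega), if_neg (by omega)]
  rw [tsum_eq_sum hz]
  rcases eq_or_lt_of_le hkN with hkeq | hklt
  · subst hkeq
    rw [Finset.sum_eq_single_of_mem 0 (by simp)]
    · simp only [Nat.sub_self, Nat.add_zero, Nat.zero_add]
      unfold Ptilde
      rw [if_pos ⟨rfl, by omega⟩]
      simp [Nat.choose_self]
    · intro s _ hs
      unfold Ptilde
      rw [if_neg (by simp [hs]), if_neg (by omega)]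
  · have key : ∀ s, 1 ≤ s → s ≤ N → Ptilde N s (N - k + s)
        = (2/3 : ℝ) ^ (N-1) * (1/2 : ℝ) ^ (N-k)
          * ((k.choose s : ℝ) * ((N-k-1).choose (s-1) : ℝ)) := by
      intro s h1 h2
      unfold Ptilde
      rw [if_neg (by omega)]
      by_cases hc : 1 ≤ s ∧ s ≤ (N - k + s) / 2 ∧ 1 ≤ N - k + s ∧ N - k + s ≤ N
      · rw [if_pos hc]
        obtain ⟨-, hc2, -, hc4⟩ := hc
        rw [show N - (N - k + s) + s = k by omega, show N - k + s - s - 1 = N - k - 1 by omega,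
          show N - k + s - s = N - k by omega]
        ring
      · rw [if_neg hc]
        have h0 : (k.choose s : ℝ) * ((N-k-1).choose (s-1) : ℝ) = 0 := by
          rcases le_or_gt s k with h | h
          · rcases le_or_gt s (N - k) with h' | h'
            · exact absurd ⟨h1, by omega, by omega, by omega⟩ hc
            · rw [Nat.choose_eq_zero_of_lt (show N - k - 1 < s - 1 by omega)]
              simp
          · rw [Nat.choose_eq_zero_of_lt h]; simp
        rw [h0, mul_zero]
    rw [Finset.sum_range_succ']
    have h00 : Ptilde N 0 (N - k + 0) = 0 := by
      unfold Ptilde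
      rw [if_neg (by omega), if_neg (by omega)]
    rw [h00, add_zero,
      Finset.sum_congr rfl (fun j hj => by
        rw [key (j + 1) (by omega) (by simpa using Finset.mem_range.mp hj),
          Nat.add_sub_cancel]),
      ← Finset.mul_sum]
    have hsum : ∑ j ∈ Finset.range N, (k.choose (j+1) : ℝ) * ((N-k-1).choose j : ℝ)
        = ((N-1).choose (k-1) : ℝ) := by
      rw [show ∀ S : Finset ℕ, ∑ j ∈ S, (k.choose (j+1) : ℝ) * ((N-k-1).choose j : ℝ)
          = ((∑ j ∈ S, k.choose (j+1) * (N-k-1).choose j : ℕ) : ℝ) from fun S => by push_cast; exact Finset.sum_congr rfl fun x _ => by ring]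
      congr 1
      rw [← Finset.sum_subset (Finset.range_subset_range.2 (show N - k - 1 + 1 ≤ N by omega))
        (fun j _ hj => by
          rw [Nat.choose_eq_zero_of_lt (show N - k - 1 < j by
            simp only [Finset.mem_range, not_lt] at hj; omega)]
          simp)]
      have := vdm (k-1) (N-k-1)
      rw [show k - 1 + 1 = k by omega, show k - 1 + (N - k - 1) + 1 = N - 1 by omega] at this
      exact this
    rw [hsum]
    rw [show (2/3 : ℝ) ^ (N-1) * (1/2 : ℝ) ^ (N-k)
        = (2/3 : ℝ) ^ (k-1) * (1/3 : ℝ) ^ (N-k) by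
      rw [show N - 1 = (k-1) + (N-k) by omega, pow_add, mul_assoc, ← mul_pow]
      norm_num]
    ring
end

section
/- A local central limit theorem (De Moivre–Laplace) holds for the total number of dimers and single points: for every A > 0 and every ε > 0 there exists N₀ such that for all integers N ≥ N₀ and all integers k satisfying |k - (2/3)(N-1)| ≤ A·√((2/9)(N-1)), one has | Q_N(k) · √((4/9)π(N-1)) · exp( (k - (2/3)(N-1))² / ((4/9)(N-1)) ) - 1 | < ε, where Q_N(k) := Σ_{s≥0} P̃_N(s, N-k+s). -/
set_option maxHeartbeats 1000000

open Real Filter Stirling Topology Nat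

lemma vandermonde_aux {N k : ℕ} (hk1 : 1 ≤ k) (hlt : k < N) :
    ∑ s ∈ Finset.range (N+1), (if 1 ≤ s then (k.choose s) * ((N-k-1).choose (s-1)) else 0)
      = (N-1).choose (k-1) := by
  have hNk : 1 ≤ N - k := by omega
  have h1 : ∑ s ∈ Finset.range (N-k+1), (if 1 ≤ s then (k.choose s) * ((N-k-1).choose (s-1)) else 0)
      = ∑ s ∈ Finset.range (N+1), (if 1 ≤ s then (k.choose s) * ((N-k-1).choose (s-1)) else 0) := by
    apply Finset.sum_subset
    · exact Finset.range_subset_range.2 (by omega)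
    · intro s hs hns
      simp only [Finset.mem_range] at hs hns
      rw [if_pos (show 1 ≤ s by omega),
        Nat.choose_eq_zero_of_lt (show N-k-1 < s-1 by omega), Nat.mul_zero]
  rw [← h1]
  have h2 : ∀ i ∈ Finset.range (N-k+1),
      (if 1 ≤ i then (k.choose i) * ((N-k-1).choose (i-1)) else 0)
        = k.choose i * (N-k-1).choose (N-k-i) := by
    intro i hi
    simp only [Finset.mem_range] at hi
    rcases Nat.eq_zero_or_pos i with rfl | hpos
    · rw [if_neg (by omega),
        Nat.choose_eq_zero_of_lt (show N-k-1 < N-k-0 by omega), Nat.mul_zero]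
    · rw [if_pos (show 1 ≤ i by omega)]
      congr 1
      have h3 := Nat.choose_symm (n := N-k-1) (k := i-1) (by omega)
      rw [show N-k-i = N-k-1-(i-1) by omega]
      exact h3.symm
  rw [Finset.sum_congr rfl h2]
  have hv := Nat.add_choose_eq k (N-k-1) (N-k)
  rw [Finset.Nat.sum_antidiagonal_eq_sum_range_succ_mk] at hv
  rw [show k + (N-k-1) = N-1 by omega] at hv
  have h4 : (N-1).choose (N-k) = (N-1).choose (k-1) := by
    rw [show N-k = N-1-(k-1) by omega]
    exact Nat.choose_symm (by omega)
  rw [← h4, hv]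

lemma Qclosed (N k : ℕ) (hk1 : 1 ≤ k) (hkN : k ≤ N) :
    ∑' s : ℕ, Ptilde N s (N - k + s)
      = ((N-1).choose (k-1) : ℝ) * (2/3 : ℝ)^(N-1) * (1/2 : ℝ)^(N-k) := by
  have hzero : ∀ s ∉ Finset.range (N+1), Ptilde N s (N - k + s) = 0 := by
    intro s hs
    simp only [Finset.mem_range, not_lt] at hs
    unfold Ptilde
    rw [if_neg (by omega), if_neg]
    rintro ⟨h1, h2, h3, h4⟩
    rw [Nat.le_div_iff_mul_le (by norm_num)] at h2
    omega
  rw [tsum_eq_sum hzero]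
  rcases hkN.eq_or_lt with rfl | hlt
  · rw [Finset.sum_eq_single 0]
    · have h0 : Ptilde k 0 (k - k + 0) = (2/3 : ℝ)^(k-1) := by
        unfold Ptilde
        rw [if_pos ⟨rfl, by omega⟩]
      rw [h0, Nat.choose_self, Nat.sub_self, pow_zero, Nat.cast_one]
      ring
    · intro s _ hs
      unfold Ptilde
      rw [if_neg (by omega), if_neg]
      rintro ⟨h1, h2, -⟩
      rw [Nat.le_div_iff_mul_le (by norm_num)] at h2
      omega
    · intro h; exact absurd (Finset.mem_range.2 (by omega)) h
  · have key : ∀ s ∈ Finset.range (N+1), Ptilde N s (N-k+s)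
        = (2/3:ℝ)^(N-1) * (1/2:ℝ)^(N-k)
          * ((if 1 ≤ s then (k.choose s) * ((N-k-1).choose (s-1)) else 0 : ℕ) : ℝ) := by
      intro s hs
      simp only [Finset.mem_range] at hs
      unfold Ptilde
      rcases Nat.eq_zero_or_pos s with rfl | hpos
      · have hne : N - k ≠ 0 := by omega
        rw [if_neg (by omega), if_neg (by omega), if_neg (by omega)]
        simp
      · rw [if_neg (by omega)]
        by_cases hc : s ≤ N - k ∧ s ≤ k
        · rw [if_pos, if_pos (show 1 ≤ s by omega)]
          · have e1 : N - (N-k+s) + s = k := by omega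
            have e2 : N - k + s - s - 1 = N - k - 1 := by omega
            have e3 : N - k + s - s = N - k := by omega
            rw [e1, e2, e3]
            push_cast
            ring
          · refine ⟨hpos, ?_, by omega, by omega⟩
            rw [Nat.le_div_iff_mul_le (by norm_num)]
            omega
        · rw [if_neg, if_pos (show 1 ≤ s by omega)]
          · have hz : k.choose s * ((N-k-1).choose (s-1)) = 0 := by
              rcases not_and_or.1 hc with h | h
              · rw [Nat.choose_eq_zero_of_lt (show N-k-1 < s-1 by omega), Nat.mul_zero]
              · rw [Nat.choose_eq_zero_of_lt (show k < s by omega), Nat.zero_mul]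
            rw [hz]
            simp
          · rintro ⟨-, h2, -, h4⟩
            rw [Nat.le_div_iff_mul_le (by norm_num)] at h2
            omega
    rw [Finset.sum_congr rfl key, ← Finset.mul_sum, ← Nat.cast_sum,
      vandermonde_aux hk1 hlt]
    ring

lemma sqrt_tendsto_atTop : Tendsto Real.sqrt atTop atTop := by
  apply Tendsto.congr' (f₁ := fun x : ℝ => x ^ ((1:ℝ)/2))
  · filter_upwards [eventually_ge_atTop (0:ℝ)] with x hx
    rw [Real.sqrt_eq_rpow]
  · exact tendsto_rpow_atTop (by norm_num)

lemma taylor_xlogx {u : ℝ} (hu : |u| ≤ 1/2) :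
    |(1+u) * Real.log (1+u) - u - u^2/2| ≤ 4 * |u|^3 := by
  have h1 : |(-u)| < 1 := by rw [abs_neg]; linarith [abs_nonneg u]
  have h2 := abs_log_sub_add_sum_range_le h1 2
  simp only [Finset.sum_range_succ, Finset.sum_range_zero] at h2
  rw [abs_neg] at h2
  have h3 : (1 : ℝ) - -u = 1 + u := by ring
  rw [h3] at h2
  have h4 : |u|^3/(1-|u|) ≤ 2 * |u|^3 := by
    rw [div_le_iff₀ (by linarith)]
    nlinarith [abs_nonneg u, pow_nonneg (abs_nonneg u) 3]
  have h5 : |Real.log (1+u) - u + u^2/2| ≤ 2 * |u|^3 := by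
    have e : Real.log (1+u) - u + u^2/2
        = 0 + (-u)^(0+1)/((0:ℕ)+1) + (-u)^(1+1)/((1:ℕ)+1) + Real.log (1+u) := by
      push_cast; ring
    rw [e]
    exact h2.trans h4
  have key : (1+u) * Real.log (1+u) - u - u^2/2
      = (1+u) * (Real.log (1+u) - u + u^2/2) - u^3/2 := by ring
  rw [key]
  have h6 : |(1+u) * (Real.log (1+u) - u + u^2/2)| ≤ (3/2) * (2*|u|^3) := by
    rw [abs_mul]
    have h7 : |1+u| ≤ 3/2 := by
      rw [abs_le] at hu ⊢; constructor <;> linarith [hu.1, hu.2]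
    exact mul_le_mul h7 h5 (abs_nonneg _) (by norm_num)
  calc |(1+u) * (Real.log (1+u) - u + u^2/2) - u^3/2|
      ≤ |(1+u) * (Real.log (1+u) - u + u^2/2)| + |u^3/2| := abs_sub _ _
    _ ≤ (3/2)*(2*|u|^3) + |u|^3/2 := by
        refine add_le_add h6 ?_
        rw [abs_div, abs_pow]; norm_num
    _ ≤ 4 * |u|^3 := by nlinarith [pow_nonneg (abs_nonneg u) 3]

lemma taylor_app {mR y : ℝ} (hm : 0 < mR) (hy : |y| ≤ mR/6) :
    |((2/3)*mR + y) * Real.log ((2/3)*mR / ((2/3)*mR + y))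
      + ((1/3)*mR - y) * Real.log ((1/3)*mR / ((1/3)*mR - y))
      + y^2 / ((4/9)*mR)| ≤ 45 * |y|^3 / mR^2 := by
  have habs := abs_le.1 hy
  have hmne : mR ≠ 0 := ne_of_gt hm
  obtain ⟨u, hu_def⟩ : ∃ u : ℝ, u = 3*y/(2*mR) := ⟨_, rfl⟩
  obtain ⟨v, hv_def⟩ : ∃ v : ℝ, v = -(3*y)/mR := ⟨_, rfl⟩
  have huy : |u| = 3*|y|/(2*mR) := by
    rw [hu_def, abs_div, abs_of_pos (by linarith : (0:ℝ) < 2*mR), abs_mul,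
      abs_of_nonneg (by norm_num : (0:ℝ) ≤ 3)]
  have hvy : |v| = 3*|y|/mR := by
    rw [hv_def, abs_div, abs_of_pos hm, abs_neg, abs_mul,
      abs_of_nonneg (by norm_num : (0:ℝ) ≤ 3)]
  have hyn : 0 ≤ |y| := abs_nonneg y
  have hu_abs : |u| ≤ 1/2 := by rw [huy, div_le_iff₀ (by linarith)]; linarith
  have hv_abs : |v| ≤ 1/2 := by rw [hvy, div_le_iff₀ hm]; linarith
  have hu1 : (0:ℝ) < 1 + u := by have := (abs_le.1 hu_abs).1; linarith
  have hv1 : (0:ℝ) < 1 + v := by have := (abs_le.1 hv_abs).1; linarith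
  have h1 : (2/3)*mR + y = (2/3)*mR*(1+u) := by rw [hu_def]; field_simp
  have h2 : (1/3)*mR - y = (1/3)*mR*(1+v) := by rw [hv_def]; field_simp; ring
  have hu1' : (1:ℝ)+u ≠ 0 := ne_of_gt hu1
  have hv1' : (1:ℝ)+v ≠ 0 := ne_of_gt hv1
  have e1 : Real.log ((2/3)*mR / ((2/3)*mR + y)) = -Real.log (1+u) := by
    rw [h1, show (2/3)*mR/((2/3)*mR*(1+u)) = (1+u)⁻¹ by field_simp, Real.log_inv]
  have e2 : Real.log ((1/3)*mR / ((1/3)*mR - y)) = -Real.log (1+v) := by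
    rw [h2, show (1/3)*mR/((1/3)*mR*(1+v)) = (1+v)⁻¹ by field_simp, Real.log_inv]
  have hdu := taylor_xlogx hu_abs
  have hdv := taylor_xlogx hv_abs
  have key : ((2/3)*mR + y) * Real.log ((2/3)*mR / ((2/3)*mR + y))
      + ((1/3)*mR - y) * Real.log ((1/3)*mR / ((1/3)*mR - y))
      + y^2 / ((4/9)*mR)
      = -((2/3)*mR*((1+u) * Real.log (1+u) - u - u^2/2))
        - (1/3)*mR*((1+v) * Real.log (1+v) - v - v^2/2) := by
    rw [e1, e2, h1, h2, hu_def, hv_def]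
    field_simp
    ring
  rw [key]
  have b1 : |(2/3)*mR*((1+u) * Real.log (1+u) - u - u^2/2)| ≤ (2/3)*mR*(4*|u|^3) := by
    rw [abs_mul, abs_of_pos (by linarith : (0:ℝ) < (2/3)*mR)]
    exact mul_le_mul_of_nonneg_left hdu (by linarith)
  have b2 : |(1/3)*mR*((1+v) * Real.log (1+v) - v - v^2/2)| ≤ (1/3)*mR*(4*|v|^3) := by
    rw [abs_mul, abs_of_pos (by linarith : (0:ℝ) < (1/3)*mR)]
    exact mul_le_mul_of_nonneg_left hdv (by linarith)
  have tri : |-((2/3)*mR*((1+u) * Real.log (1+u) - u - u^2/2))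
        - (1/3)*mR*((1+v) * Real.log (1+v) - v - v^2/2)|
      ≤ |(2/3)*mR*((1+u) * Real.log (1+u) - u - u^2/2)|
        + |(1/3)*mR*((1+v) * Real.log (1+v) - v - v^2/2)| := by
    calc _ ≤ |-((2/3)*mR*((1+u) * Real.log (1+u) - u - u^2/2))|
          + |(1/3)*mR*((1+v) * Real.log (1+v) - v - v^2/2)| := abs_sub _ _
      _ = _ := by rw [abs_neg]
  refine tri.trans ((add_le_add b1 b2).trans (le_of_eq ?_))
  rw [huy, hvy]
  field_simp
  ring

lemma stirling_fact (n : ℕ) (hn : 1 ≤ n) :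
    (n ! : ℝ) = stirlingSeq n * (Real.sqrt (2*n) * ((n:ℝ)/Real.exp 1)^n) := by
  have h1 : (0:ℝ) < Real.sqrt (2*n) := Real.sqrt_pos.2 (by positivity)
  have h2 : (0:ℝ) < ((n:ℝ)/Real.exp 1)^n := by positivity
  rw [stirlingSeq]
  field_simp

lemma stirling_pos (n : ℕ) (hn : 1 ≤ n) : 0 < stirlingSeq n := by
  obtain ⟨k, rfl⟩ := Nat.exists_eq_add_of_le hn
  simpa [Nat.add_comm] using stirlingSeq'_pos k

lemma alg_aux (a b c q1 q2 q3 P Pj Pr A' B' X Y : ℝ) (hb : b ≠ 0) (hc : c ≠ 0)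
    (hq2 : q2 ≠ 0) (hq3 : q3 ≠ 0) (hPj : Pj ≠ 0) (hPr : Pr ≠ 0)
    (key : P * (X * Y) = A' * B' * (Pj * Pr)) :
    a * (q1 * P) / (b * (q2 * Pj) * (c * (q3 * Pr))) * X * Y
      = a / (b * c) * (q1 / (q2 * q3)) * (A' * B') := by
  field_simp
  linear_combination (a * q1) * key

lemma binom_stirling (m j : ℕ) (h1 : 1 ≤ j) (h2 : j < m) :
    (m.choose j : ℝ) * (2/3)^j * (1/3)^(m-j)
      = stirlingSeq m / (stirlingSeq j * stirlingSeq (m-j))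
        * (Real.sqrt (2*m) / (Real.sqrt (2*j) * Real.sqrt (2*((m-j:ℕ):ℝ))))
        * Real.exp ((j:ℝ) * Real.log ((2/3)*m/j)
            + ((m-j : ℕ):ℝ) * Real.log ((1/3)*m/((m-j:ℕ):ℝ))) := by
  have hj0 : (0:ℝ) < (j:ℝ) := by exact_mod_cast h1
  have hm0 : (0:ℝ) < (m:ℝ) := by exact_mod_cast Nat.lt_of_le_of_lt (Nat.zero_le j) h2
  have hr1 : 1 ≤ m - j := by omega
  have hr0 : (0:ℝ) < ((m-j:ℕ):ℝ) := by exact_mod_cast hr1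
  have hE : (0:ℝ) < Real.exp 1 := Real.exp_pos 1
  -- rewrite the exponential as powers
  have hexp : Real.exp ((j:ℝ) * Real.log ((2/3)*m/j)
        + ((m-j : ℕ):ℝ) * Real.log ((1/3)*m/((m-j:ℕ):ℝ)))
      = ((2/3)*(m:ℝ)/(j:ℝ))^j * ((1/3)*(m:ℝ)/((m-j:ℕ):ℝ))^(m-j) := by
    rw [Real.exp_add, Real.exp_nat_mul, Real.exp_nat_mul,
      Real.exp_log (by positivity), Real.exp_log (by positivity)]
  rw [hexp]
  rw [Nat.cast_choose ℝ h2.le, stirling_fact m (by omega), stirling_fact j h1,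
    stirling_fact (m-j) hr1]
  have key : ((m:ℝ)/Real.exp 1)^m * ((2/3:ℝ)^j * (1/3:ℝ)^(m-j))
      = ((2/3)*(m:ℝ)/(j:ℝ))^j * ((1/3)*(m:ℝ)/((m-j:ℕ):ℝ))^(m-j)
        * (((j:ℝ)/Real.exp 1)^j * (((m-j:ℕ):ℝ)/Real.exp 1)^(m-j)) := by
    have e1 : ((2/3)*(m:ℝ)/(j:ℝ)) * ((j:ℝ)/Real.exp 1) = (2/3)*((m:ℝ)/Real.exp 1) := by
      field_simp
    have e2 : ((1/3)*(m:ℝ)/((m-j:ℕ):ℝ)) * (((m-j:ℕ):ℝ)/Real.exp 1)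
        = (1/3)*((m:ℝ)/Real.exp 1) := by
      field_simp
    calc ((m:ℝ)/Real.exp 1)^m * ((2/3:ℝ)^j * (1/3:ℝ)^(m-j))
        = ((m:ℝ)/Real.exp 1)^j * ((m:ℝ)/Real.exp 1)^(m-j) * ((2/3:ℝ)^j * (1/3:ℝ)^(m-j)) := by
          rw [← pow_add]; congr 2; omega
      _ = ((2/3)*((m:ℝ)/Real.exp 1))^j * ((1/3)*((m:ℝ)/Real.exp 1))^(m-j) := by
          rw [mul_pow, mul_pow]; ring
      _ = (((2/3)*(m:ℝ)/(j:ℝ)) * ((j:ℝ)/Real.exp 1))^j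
            * (((1/3)*(m:ℝ)/((m-j:ℕ):ℝ)) * (((m-j:ℕ):ℝ)/Real.exp 1))^(m-j) := by
          rw [e1, e2]
      _ = _ := by rw [mul_pow, mul_pow]; ring
  have hsm : 0 < stirlingSeq m := stirling_pos m (by omega)
  have hsj : 0 < stirlingSeq j := stirling_pos j h1
  have hsr : 0 < stirlingSeq (m-j) := stirling_pos (m-j) hr1
  have hq1 : (0:ℝ) < Real.sqrt (2*m) := Real.sqrt_pos.2 (by positivity)
  have hq2 : (0:ℝ) < Real.sqrt (2*j) := Real.sqrt_pos.2 (by positivity)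
  have hq3 : (0:ℝ) < Real.sqrt (2*(m-j:ℕ)) := Real.sqrt_pos.2 (by positivity)
  have hp1 : (0:ℝ) < ((j:ℝ)/Real.exp 1)^j := by positivity
  have hp2 : (0:ℝ) < (((m-j:ℕ):ℝ)/Real.exp 1)^(m-j) := by positivity
  exact alg_aux (stirlingSeq m) (stirlingSeq j) (stirlingSeq (m-j))
    (Real.sqrt (2*(m:ℝ))) (Real.sqrt (2*(j:ℝ))) (Real.sqrt (2*((m-j:ℕ):ℝ)))
    (((m:ℝ)/Real.exp 1)^m) (((j:ℝ)/Real.exp 1)^j) ((((m-j:ℕ):ℝ)/Real.exp 1)^(m-j))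
    (((2/3)*(m:ℝ)/(j:ℝ))^j) (((1/3)*(m:ℝ)/((m-j:ℕ):ℝ))^(m-j))
    ((2/3:ℝ)^j) ((1/3:ℝ)^(m-j))
    hsj.ne' hsr.ne' hq2.ne' hq3.ne' hp1.ne' hp2.ne' key

lemma aux_absD {A s y : ℝ} (hA : 0 < A) (hs : 20 ≤ s) (hy : |y| ≤ (A+1)*s) :
    |1/3*s^2*y + y^2| ≤ 2/5*(A+1)^2*s^3 := by
  have h0 : (0:ℝ) < s := by linarith
  have h1 : |1/3*s^2*y + y^2| ≤ 1/3*s^2*|y| + y^2 := by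
    calc _ ≤ |1/3*s^2*y| + |y^2| := abs_add_le _ _
      _ = 1/3*s^2*|y| + y^2 := by
          rw [abs_mul, abs_of_pos (by positivity : (0:ℝ) < 1/3*s^2),
            abs_of_nonneg (sq_nonneg y)]
  have h2 : y^2 ≤ (A+1)^2*s^2 := by nlinarith [sq_abs y, abs_nonneg y]
  have h3 : s^2*|y| ≤ s^2*((A+1)*s) := mul_le_mul_of_nonneg_left hy (sq_nonneg s)
  have h4 : (A+1)^2*s^2*20 ≤ (A+1)^2*s^2*s :=
    mul_le_mul_of_nonneg_left hs (by positivity)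
  have h5 : (A+1)*s^3 ≤ (A+1)^2*s^3 := by nlinarith [pow_pos (show (0:ℝ)<s by linarith) 3]
  nlinarith [h1, h2, h3, h4, h5]

lemma aux_Z {A s y J : ℝ} (hA : 0 < A) (hs : 20 ≤ s) (hy : |y| ≤ (A+1)*s)
    (hJ : s^4/8 ≤ J) :
    Real.pi * |1/3*s^2*y + y^2| * s ≤ 32*(A+1)^2 * J := by
  have h0 : (0:ℝ) < s := by linarith
  have hD := aux_absD hA hs hy
  have habs : (0:ℝ) ≤ |1/3*s^2*y + y^2| := abs_nonneg _
  have hpi4 := Real.pi_le_four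
  have hpi0 := Real.pi_pos
  have step1 : Real.pi * |1/3*s^2*y + y^2| * s ≤ 4 * (2/5*(A+1)^2*s^3) * s := by
    have g1 : Real.pi * |1/3*s^2*y + y^2| ≤ 4 * (2/5*(A+1)^2*s^3) :=
      mul_le_mul hpi4 hD habs (by norm_num)
    nlinarith [g1]
  have step2 : 4 * (2/5*(A+1)^2*s^3) * s ≤ 32*(A+1)^2 * J := by
    have g2 := mul_le_mul_of_nonneg_left hJ (by positivity : (0:ℝ) ≤ 32*(A+1)^2)
    nlinarith [g2]
  linarith

lemma aux_b1 {A s y : ℝ} (hA : 0 < A) (hs : 20 ≤ s) (hy : |y| ≤ (A+1)*s) :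
    45*|y|^3/(s^2)^2 ≤ 45*(A+1)^3/s := by
  have h0 : (0:ℝ) < s := by linarith
  rw [div_le_div_iff₀ (by positivity) h0]
  have h1 : |y|^3 ≤ (A+1)^3*s^3 := by
    have := pow_le_pow_left₀ (abs_nonneg y) hy 3
    rwa [mul_pow] at this
  nlinarith [h1, pow_pos h0 3, pow_nonneg (abs_nonneg y) 3]

lemma aux_b2 {A s z : ℝ} (hA : 0 < A) (hs : 20 ≤ s) (hz : |z| ≤ 3*(A+1)*s) :
    |z|/(4/9*s^2) ≤ 8*(A+1)^3/s := by
  have h0 : (0:ℝ) < s := by linarith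
  rw [div_le_div_iff₀ (by positivity) h0]
  have hP1 : (1:ℝ) ≤ A+1 := by linarith
  have hP2 : (1:ℝ) ≤ (A+1)^2 := by nlinarith
  have hP3 : (A+1) ≤ (A+1)^3 := by nlinarith
  have h1 : |z| * s ≤ 3*(A+1)*s*s := mul_le_mul_of_nonneg_right hz h0.le
  have h2 : (A+1)*s^2 ≤ (A+1)^3*s^2 := mul_le_mul_of_nonneg_right hP3 (sq_nonneg s)
  nlinarith [h1, h2, sq_nonneg s]

lemma main_est (A : ℝ) (hA : 0 < A) (N k : ℕ)
    (hN : 400*(A+1)^2 + 400 ≤ (N:ℝ) - 1)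
    (hk : |(k:ℝ) - 2/3*((N:ℝ)-1)| ≤ A * Real.sqrt (2/9*((N:ℝ)-1))) :
    ((N:ℝ)-1)/2 ≤ ((k-1 : ℕ):ℝ)
    ∧ ((N:ℝ)-1)/4 ≤ (((N-1)-(k-1) : ℕ):ℝ)
    ∧ (∑' s : ℕ, Ptilde N s (N - k + s)) * Real.sqrt (4/9*Real.pi*((N:ℝ)-1))
        * Real.exp (((k:ℝ) - 2/3*((N:ℝ)-1))^2 / (4/9*((N:ℝ)-1)))
      = (stirlingSeq (N-1) / (stirlingSeq (k-1) * stirlingSeq ((N-1)-(k-1))))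
        * Real.sqrt (2*Real.pi/9*((N:ℝ)-1)^2/(((k:ℝ)-1)*(((N:ℝ)-1)-((k:ℝ)-1))))
        * Real.exp (((k:ℝ)-1) * Real.log (2/3*((N:ℝ)-1)/((k:ℝ)-1))
            + (((N:ℝ)-1)-((k:ℝ)-1)) * Real.log (1/3*((N:ℝ)-1)/(((N:ℝ)-1)-((k:ℝ)-1)))
            + ((k:ℝ) - 2/3*((N:ℝ)-1))^2 / (4/9*((N:ℝ)-1)))
    ∧ |2*Real.pi/9*((N:ℝ)-1)^2/(((k:ℝ)-1)*(((N:ℝ)-1)-((k:ℝ)-1))) - Real.pi|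
        ≤ 32*(A+1)^2 / Real.sqrt ((N:ℝ)-1)
    ∧ |((k:ℝ)-1) * Real.log (2/3*((N:ℝ)-1)/((k:ℝ)-1))
        + (((N:ℝ)-1)-((k:ℝ)-1)) * Real.log (1/3*((N:ℝ)-1)/(((N:ℝ)-1)-((k:ℝ)-1)))
        + ((k:ℝ) - 2/3*((N:ℝ)-1))^2 / (4/9*((N:ℝ)-1))|
        ≤ 53*(A+1)^3 / Real.sqrt ((N:ℝ)-1) := by
  have hA1 : (0:ℝ) < A + 1 := by linarith
  have hm0 : (0:ℝ) < (N:ℝ) - 1 := by nlinarith [sq_nonneg (A+1)]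
  set mR : ℝ := (N:ℝ) - 1 with hmRdef
  set x : ℝ := (k:ℝ) - 2/3*mR with hxdef
  set jR : ℝ := (k:ℝ) - 1 with hjRdef
  set sm : ℝ := Real.sqrt mR with hsdef
  have hs0 : 0 < sm := Real.sqrt_pos.2 hm0
  have hs2 : sm^2 = mR := Real.sq_sqrt hm0.le
  have hs20A : 20*(A+1) ≤ sm := by
    rw [hsdef, ← Real.sqrt_sq (by positivity : (0:ℝ) ≤ 20*(A+1))]
    apply Real.sqrt_le_sqrt
    nlinarith
  have hs20 : 20 ≤ sm := by
    rw [hsdef, ← Real.sqrt_sq (by norm_num : (0:ℝ) ≤ 20)]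
    apply Real.sqrt_le_sqrt
    nlinarith [sq_nonneg (A+1)]
  have hxb : |x| ≤ A * sm := by
    refine hk.trans ?_
    have h1 : Real.sqrt (2/9*mR) ≤ sm := Real.sqrt_le_sqrt (by linarith)
    exact mul_le_mul_of_nonneg_left h1 hA.le
  have hyb : |x - 1| ≤ (A+1) * sm := by
    have h1 : |x - 1| ≤ |x| + 1 := by
      calc |x - 1| ≤ |x| + |(1:ℝ)| := abs_sub x 1
        _ = |x| + 1 := by norm_num
    nlinarith
  have hyM : |x - 1| ≤ mR/20 := by nlinarith
  have hxM : |x| ≤ mR/20 := by nlinarith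
  have hxlow := (abs_le.1 hxM).1
  have hxhigh := (abs_le.1 hxM).2
  have hylow := (abs_le.1 hyM).1
  have hyhigh := (abs_le.1 hyM).2
  have hkreal : (k:ℝ) = 2/3*mR + x := by rw [hxdef]; ring
  have hk2 : 2 ≤ k := by
    have : (2:ℝ) ≤ (k:ℝ) := by nlinarith
    exact_mod_cast this
  have hkN : k < N := by
    have : (k:ℝ) < (N:ℝ) := by nlinarith
    exact_mod_cast this
  have hN1 : 1 ≤ N := by omega
  have hj1 : 1 ≤ k - 1 := by omega
  have hjm : k - 1 < N - 1 := by omega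
  have hc1 : ((N-1:ℕ):ℝ) = mR := by
    rw [Nat.cast_sub hN1, hmRdef, Nat.cast_one]
  have hc2 : ((k-1:ℕ):ℝ) = jR := by
    rw [Nat.cast_sub (by omega : 1 ≤ k), hjRdef, Nat.cast_one]
  have hc3 : (((N-1)-(k-1):ℕ):ℝ) = mR - jR := by
    rw [Nat.cast_sub hjm.le, hc1, hc2]
  have hjy : jR = 2/3*mR + (x - 1) := by rw [hjRdef, hxdef]; ring
  have hry : mR - jR = 1/3*mR - (x - 1) := by rw [hjRdef, hxdef]; ring
  have hjlow : mR/2 ≤ jR := by rw [hjy]; nlinarith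
  have hjpos : 0 < jR := by nlinarith
  have hrlow : mR/4 ≤ mR - jR := by rw [hry]; nlinarith
  have hrpos : 0 < mR - jR := by nlinarith
  refine ⟨by rw [hc2]; exact hjlow, by rw [hc3]; exact hrlow, ?_, ?_, ?_⟩
  · -- the identity
    rw [Qclosed N k (by omega) hkN.le]
    have hpow2 : (2/3:ℝ)^(N-1)*(1/2:ℝ)^(N-k) = (2/3:ℝ)^(k-1)*(1/3:ℝ)^((N-1)-(k-1)) := by
      rw [show (N-1)-(k-1) = N-k by omega, show N-1 = (k-1)+(N-k) by omega, pow_add,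
        mul_assoc, ← mul_pow]
      norm_num
    have e0 : ((N-1).choose (k-1) : ℝ) * (2/3 : ℝ)^(N-1) * (1/2 : ℝ)^(N-k)
        = ((N-1).choose (k-1) : ℝ) * (2/3 : ℝ)^(k-1) * (1/3 : ℝ)^((N-1)-(k-1)) := by
      rw [mul_assoc, hpow2, mul_assoc]
    rw [e0, binom_stirling (N-1) (k-1) hj1 hjm, hc1, hc2, hc3]
    have hsq : Real.sqrt (2*Real.pi/9*mR^2/(jR*(mR-jR)))
        = Real.sqrt (2*mR) * Real.sqrt (4/9*Real.pi*mR)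
          / (Real.sqrt (2*jR) * Real.sqrt (2*(mR-jR))) := by
      rw [← Real.sqrt_mul (by positivity), ← Real.sqrt_mul (by positivity),
        ← Real.sqrt_div (by positivity)]
      congr 1
      field_simp
      ring
    rw [hsq, Real.exp_add (jR * Real.log (2/3*mR/jR)
      + (mR - jR) * Real.log (1/3*mR/(mR - jR))) (x^2/(4/9*mR))]
    generalize Real.exp (jR * Real.log (2/3*mR/jR)
      + (mR - jR) * Real.log (1/3*mR/(mR - jR))) = E1
    generalize Real.exp (x^2/(4/9*mR)) = E2
    ring
  · -- Z bound
    have hZsub : 2*Real.pi/9*mR^2/(jR*(mR-jR)) - Real.pi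
        = Real.pi * (2/9*mR^2 - jR*(mR-jR)) / (jR*(mR-jR)) := by
      field_simp
    rw [hZsub, abs_div, abs_of_pos (by positivity : (0:ℝ) < jR*(mR-jR)), abs_mul,
      abs_of_pos Real.pi_pos, div_le_div_iff₀ (by positivity) hs0]
    have hdiff : 2/9*mR^2 - jR*(mR-jR) = 1/3*sm^2*(x-1) + (x-1)^2 := by
      rw [hjy, hs2]; ring
    rw [hdiff]
    have hJ : sm^4/8 ≤ jR*(mR-jR) := by
      have h1 := mul_le_mul hjlow hrlow (by linarith) (by linarith)
      nlinarith [hs2]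
    exact aux_Z hA hs20 hyb hJ
  · -- G bound
    have hy6 : |x-1| ≤ mR/6 := hyM.trans (by linarith)
    have htay := taylor_app hm0 hy6
    have habs2x : |2*x-1| ≤ 3*(A+1)*sm := by
      have h1 : |2*x-1| ≤ 2*|x| + 1 := by
        calc |2*x-1| ≤ |2*x| + |(1:ℝ)| := abs_sub (2*x) 1
          _ = 2*|x| + 1 := by rw [abs_mul]; norm_num
      linarith [h1, hxb, mul_pos hA hs0, hs20]
    rw [hry, hjy]
    have hsplit : (2/3*mR + (x-1)) * Real.log (2/3*mR/(2/3*mR + (x-1)))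
        + (1/3*mR - (x-1)) * Real.log (1/3*mR/(1/3*mR - (x-1)))
        + x^2/(4/9*mR)
        = ((2/3)*mR + (x-1)) * Real.log ((2/3)*mR/((2/3)*mR + (x-1)))
          + ((1/3)*mR - (x-1)) * Real.log ((1/3)*mR/((1/3)*mR - (x-1)))
          + (x-1)^2/((4/9)*mR)
          + (2*x-1)/(4/9*mR) := by ring
    rw [hsplit]
    have tri : |((2/3)*mR + (x-1)) * Real.log ((2/3)*mR/((2/3)*mR + (x-1)))
          + ((1/3)*mR - (x-1)) * Real.log ((1/3)*mR/((1/3)*mR - (x-1)))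
          + (x-1)^2/((4/9)*mR)
          + (2*x-1)/(4/9*mR)|
        ≤ 45 * |x-1|^3 / mR^2 + |2*x-1|/(4/9*mR) := by
      calc _ ≤ |((2/3)*mR + (x-1)) * Real.log ((2/3)*mR/((2/3)*mR + (x-1)))
          + ((1/3)*mR - (x-1)) * Real.log ((1/3)*mR/((1/3)*mR - (x-1)))
          + (x-1)^2/((4/9)*mR)| + |(2*x-1)/(4/9*mR)| := abs_add_le _ _
        _ ≤ 45 * |x-1|^3 / mR^2 + |2*x-1|/(4/9*mR) := by
            refine add_le_add htay (le_of_eq ?_)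
            rw [abs_div, abs_of_pos (by linarith : (0:ℝ) < 4/9*mR)]
    refine tri.trans ?_
    have b1 : 45 * |x-1|^3 / mR^2 ≤ 45*(A+1)^3/sm := by
      rw [← hs2]
      exact aux_b1 hA hs20 hyb
    have b2 : |2*x-1|/(4/9*mR) ≤ 8*(A+1)^3/sm := by
      rw [← hs2]
      exact aux_b2 hA hs20 habs2x
    have : 45*(A+1)^3/sm + 8*(A+1)^3/sm = 53*(A+1)^3/sm := by
      field_simp; ring
    linarith

/-- local CLT (De Moivre–Laplace) for the total number of dimers
and single points, `Q_N(k) := Σ_{s≥0} P̃_N(s, N-k+s)`. -/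
theorem clt_dimers_and_single_points :
    ∀ A > (0 : ℝ), ∀ ε > (0 : ℝ), ∃ N₀ : ℕ, ∀ N : ℕ, N₀ ≤ N → ∀ k : ℕ,
      |(k : ℝ) - 2 / 3 * ((N : ℝ) - 1)| ≤ A * Real.sqrt (2 / 9 * ((N : ℝ) - 1)) →
      |(∑' s : ℕ, Ptilde N s (N - k + s))
          * Real.sqrt (4 / 9 * Real.pi * ((N : ℝ) - 1))
          * Real.exp (((k : ℝ) - 2 / 3 * ((N : ℝ) - 1)) ^ 2 / (4 / 9 * ((N : ℝ) - 1)))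
        - 1| < ε := by
  intro A hA ε hε
  by_contra hcon
  push_neg at hcon
  choose Nf hNf kf hk1 hk2 using hcon
  have hNtop : Tendsto Nf atTop atTop := tendsto_atTop_mono hNf tendsto_id
  have hmR_top : Tendsto (fun i => (Nf i : ℝ) - 1) atTop atTop := by
    have := tendsto_atTop_add_const_right atTop (-1 : ℝ)
      (tendsto_natCast_atTop_atTop.comp hNtop)
    simpa [sub_eq_add_neg] using this
  have hbig := fun i => main_est A hA (Nf i) (kf i)
  have hev : ∀ᶠ i in atTop, 400*(A+1)^2 + 400 ≤ (Nf i : ℝ) - 1 :=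
    hmR_top.eventually_ge_atTop _
  -- nat subsequences to infinity
  have hcast_m : ∀ᶠ i in atTop, ((Nf i - 1 : ℕ):ℝ) = (Nf i : ℝ) - 1 := by
    filter_upwards [hNtop.eventually_ge_atTop 1] with i hi
    rw [Nat.cast_sub hi, Nat.cast_one]
  have hmtop : Tendsto (fun i => Nf i - 1) atTop atTop := by
    rw [← tendsto_natCast_atTop_iff (R := ℝ)]
    exact Tendsto.congr' (hcast_m.mono fun _ h => h.symm) hmR_top
  have hjtop : Tendsto (fun i => kf i - 1) atTop atTop := by
    rw [← tendsto_natCast_atTop_iff (R := ℝ)]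
    apply tendsto_atTop_mono' atTop
      (by filter_upwards [hev] with i hi
          exact (hbig i hi (hk1 i)).1)
    exact hmR_top.atTop_div_const (by norm_num)
  have hrtop : Tendsto (fun i => (Nf i - 1) - (kf i - 1)) atTop atTop := by
    rw [← tendsto_natCast_atTop_iff (R := ℝ)]
    apply tendsto_atTop_mono' atTop
      (by filter_upwards [hev] with i hi
          exact (hbig i hi (hk1 i)).2.1)
    exact hmR_top.atTop_div_const (by norm_num)
  have hsm := Stirling.tendsto_stirlingSeq_sqrt_pi.comp hmtop
  have hsj := Stirling.tendsto_stirlingSeq_sqrt_pi.comp hjtop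
  have hsr := Stirling.tendsto_stirlingSeq_sqrt_pi.comp hrtop
  have hsqrtpi : (0:ℝ) < Real.sqrt Real.pi := Real.sqrt_pos.2 Real.pi_pos
  have hF1 : Tendsto (fun i => stirlingSeq (Nf i - 1)
        / (stirlingSeq (kf i - 1) * stirlingSeq ((Nf i - 1) - (kf i - 1))))
      atTop (𝓝 (Real.sqrt Real.pi / (Real.sqrt Real.pi * Real.sqrt Real.pi))) :=
    hsm.div (hsj.mul hsr) (by positivity)
  have hsqrtinv : Tendsto (fun i => (Real.sqrt ((Nf i : ℝ) - 1))⁻¹) atTop (𝓝 0) :=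
    (sqrt_tendsto_atTop.comp hmR_top).inv_tendsto_atTop
  have hbound : ∀ c : ℝ, Tendsto (fun i => c / Real.sqrt ((Nf i : ℝ) - 1)) atTop (𝓝 0) := by
    intro c
    simpa [div_eq_mul_inv] using hsqrtinv.const_mul c
  have hZ : Tendsto (fun i => 2*Real.pi/9*((Nf i:ℝ)-1)^2
        /(((kf i:ℝ)-1)*(((Nf i:ℝ)-1)-((kf i:ℝ)-1)))) atTop (𝓝 Real.pi) := by
    rw [← tendsto_sub_nhds_zero_iff]
    apply squeeze_zero_norm' _ (hbound (32*(A+1)^2))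
    filter_upwards [hev] with i hi
    simpa [Real.norm_eq_abs] using (hbig i hi (hk1 i)).2.2.2.1
  have hW : Tendsto (fun i => Real.sqrt (2*Real.pi/9*((Nf i:ℝ)-1)^2
        /(((kf i:ℝ)-1)*(((Nf i:ℝ)-1)-((kf i:ℝ)-1))))) atTop (𝓝 (Real.sqrt Real.pi)) :=
    hZ.sqrt
  have hG : Tendsto (fun i => ((kf i:ℝ)-1) * Real.log (2/3*((Nf i:ℝ)-1)/((kf i:ℝ)-1))
        + (((Nf i:ℝ)-1)-((kf i:ℝ)-1))
          * Real.log (1/3*((Nf i:ℝ)-1)/(((Nf i:ℝ)-1)-((kf i:ℝ)-1)))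
        + ((kf i:ℝ) - 2/3*((Nf i:ℝ)-1))^2 / (4/9*((Nf i:ℝ)-1))) atTop (𝓝 0) := by
    apply squeeze_zero_norm' _ (hbound (53*(A+1)^3))
    filter_upwards [hev] with i hi
    simpa [Real.norm_eq_abs] using (hbig i hi (hk1 i)).2.2.2.2
  have hexpG := (Real.continuous_exp.tendsto 0).comp hG
  rw [Real.exp_zero] at hexpG
  have hlim1 := (hF1.mul hW).mul hexpG
  have hone : Real.sqrt Real.pi / (Real.sqrt Real.pi * Real.sqrt Real.pi)
      * Real.sqrt Real.pi * 1 = 1 := by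
    field_simp
  rw [hone] at hlim1
  have hP : Tendsto (fun i => (∑' s : ℕ, Ptilde (Nf i) s (Nf i - kf i + s))
      * Real.sqrt (4 / 9 * Real.pi * ((Nf i : ℝ) - 1))
      * Real.exp (((kf i : ℝ) - 2 / 3 * ((Nf i : ℝ) - 1)) ^ 2
          / (4 / 9 * ((Nf i : ℝ) - 1)))) atTop (𝓝 1) := by
    apply Tendsto.congr' _ hlim1
    filter_upwards [hev] with i hi
    exact ((hbig i hi (hk1 i)).2.2.1).symm
  have hfin := Metric.tendsto_nhds.1 hP ε hε
  obtain ⟨i, hi⟩ := hfin.exists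
  rw [Real.dist_eq] at hi
  exact absurd hi (not_lt.2 (hk2 i))
end

section
/- For every integer N ≥ 1 and every integer h with 0 ≤ h ≤ N-1, one has Σ_{(s,t): t-s=h} P̃_N(s,t) = C(N-1, h) · (1/3)^{h} · (2/3)^{N-1-h}. In other words, the random variable n_b+n_r+n_{br} (the total length of dimers, equal to t-s) has the binomial distribution B(N-1, 1/3). -/
lemma vandermonde_aux_s3 (N h : ℕ) (hh : h ≤ N - 1) (hN : 1 ≤ N) (hpos : 1 ≤ h) :
    ∑ s ∈ Finset.range (h + 1), ((N - h).choose s) * ((h - 1).choose (h - s))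
      = (N - 1).choose h := by
  have : (N - h) + (h - 1) = N - 1 := by omega
  rw [← this, Nat.add_choose_eq, Finset.Nat.sum_antidiagonal_eq_sum_range_succ_mk]

/-- the total length of dimers `t - s` has the binomial
distribution `B(N-1, 1/3)`: the sum over all pairs `(s,t)` with `t - s = h`
(i.e. `t = s + h`) of `P̃_N(s,t)` equals `C(N-1,h)·(1/3)^h·(2/3)^{N-1-h}`. -/
theorem total_length_binomial (N h : ℕ) (hN : 1 ≤ N) (hh : h ≤ N - 1) :
    ∑' s : ℕ, Ptilde N s (s + h)
      = ((N - 1).choose h : ℝ) * (1 / 3 : ℝ) ^ h * (2 / 3 : ℝ) ^ (N - 1 - h) := by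
  have key : ∀ s : ℕ, s ∉ Finset.range (h + 1) → Ptilde N s (s + h) = 0 := by
    intro s hs
    rw [Finset.mem_range, Nat.lt_succ_iff, not_le] at hs
    unfold Ptilde
    rw [if_neg, if_neg]
    · rintro ⟨-, h2, -⟩
      have := Nat.div_le_self (s + h) 2
      have h2' : 2 * s ≤ s + h := by
        calc 2 * s ≤ 2 * ((s + h) / 2) := by omega
        _ ≤ s + h := Nat.mul_div_le _ _
      omega
    · rintro ⟨h1, h2⟩; omega
  rw [tsum_eq_sum key]
  rcases Nat.eq_zero_or_pos h with rfl | hpos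
  · simp [Ptilde]
  · have term_eq : ∀ s ∈ Finset.range (h + 1),
        Ptilde N s (s + h)
          = (2 / 3 : ℝ) ^ (N - 1) * (1 / 2 : ℝ) ^ h
              * (((N - h).choose s : ℝ) * ((h - 1).choose (h - s) : ℝ)) := by
      intro s hs
      rw [Finset.mem_range, Nat.lt_succ_iff] at hs
      unfold Ptilde
      rcases Nat.eq_zero_or_pos s with rfl | hspos
      · rw [if_neg (by omega), if_neg (by rintro ⟨a, -⟩; omega)]
        rw [Nat.choose_eq_zero_of_lt (by omega : h - 1 < h - 0)]
        simp
      · rw [if_neg (by omega)]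
        by_cases hsh : s + h ≤ N
        · rw [if_pos ⟨hspos, by omega, by omega, hsh⟩]
          have e1 : N - (s + h) + s = N - h := by omega
          have e2 : s + h - s = h := by omega
          rw [e1, e2]
          have e4 : (h - 1).choose (s - 1) = (h - 1).choose (h - s) := by
            rw [← Nat.choose_symm (by omega : s - 1 ≤ h - 1)]
            congr 1; omega
          rw [e4]; ring
        · rw [if_neg (by rintro ⟨-, -, -, a⟩; omega)]
          rw [Nat.choose_eq_zero_of_lt (by omega : N - h < s)]
          simp
    rw [Finset.sum_congr rfl term_eq, ← Finset.mul_sum]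
    have : ∑ s ∈ Finset.range (h + 1),
        (((N - h).choose s : ℝ) * ((h - 1).choose (h - s) : ℝ))
        = ((N - 1).choose h : ℝ) := by
      rw [← vandermonde_aux_s3 N h hh hN hpos]
      push_cast
      rfl
    rw [this]
    have hN1 : N - 1 = h + (N - 1 - h) := by omega
    rw [hN1, pow_add, Nat.add_sub_cancel_left,
      show ((1:ℝ)/3) = (1/2)*(2/3) by norm_num, mul_pow]
    ring
end

section
/- For every integer N ≥ 1, the second factorial moment of the total length of dimers equals (N-1)(N-2)/9 exactly: Σ_{t=1}^{N} Σ_{s=1}^{⌊t/2⌋} (t-s)(t-s-1) · P̃_N(s,t) = (N-1)(N-2)/9. -/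
open Finset

/-- Auxiliary weight after the substitution `m = t - s`. -/
noncomputable def Wdim (N s m : ℕ) : ℝ :=
  (m : ℝ) * ((m : ℝ) - 1) * (2 / 3 : ℝ) ^ (N - 1)
    * ((N - m).choose s : ℝ) * ((m - 1).choose (s - 1) : ℝ) * (1 / 2 : ℝ) ^ m

lemma choose_shift (k j : ℕ) :
    ((j + 2) * (j + 1)) * (k + 2).choose (j + 2) = ((k + 2) * (k + 1)) * k.choose j := by
  have h1 : (k + 2) * (k + 1).choose (j + 1) = (k + 2).choose (j + 2) * (j + 2) :=
    Nat.add_one_mul_choose_eq (k + 1) (j + 1)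
  have h2 : (k + 1) * k.choose j = (k + 1).choose (j + 1) * (j + 1) :=
    Nat.add_one_mul_choose_eq k j
  calc ((j + 2) * (j + 1)) * (k + 2).choose (j + 2)
      = (j + 1) * ((k + 2).choose (j + 2) * (j + 2)) := by ring
    _ = (j + 1) * ((k + 2) * (k + 1).choose (j + 1)) := by rw [h1]
    _ = (k + 2) * ((k + 1).choose (j + 1) * (j + 1)) := by ring
    _ = (k + 2) * ((k + 1) * k.choose j) := by rw [← h2]
    _ = ((k + 2) * (k + 1)) * k.choose j := by ring

lemma sum_fact2 (k : ℕ) (x : ℝ) :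
    ∑ m ∈ range (k + 3), (m : ℝ) * ((m : ℝ) - 1) * ((k + 2).choose m : ℝ) * x ^ m
      = ((k : ℝ) + 2) * ((k : ℝ) + 1) * x ^ 2 * (1 + x) ^ k := by
  rw [Finset.sum_range_succ', Finset.sum_range_succ']
  have hb : (1 + x) ^ k = ∑ j ∈ range (k + 1), (k.choose j : ℝ) * x ^ j := by
    rw [add_comm 1 x, add_pow]
    refine Finset.sum_congr rfl fun j _ => by ring
  rw [hb, Finset.mul_sum]
  have h0 : ((0 : ℕ) : ℝ) * (((0 : ℕ) : ℝ) - 1) * (((k + 2).choose 0 : ℕ) : ℝ) * x ^ 0 = 0 := by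
    norm_num
  have h1 : (((0 : ℕ) + 1 : ℕ) : ℝ) * ((((0 : ℕ) + 1 : ℕ) : ℝ) - 1)
      * (((k + 2).choose (0 + 1) : ℕ) : ℝ) * x ^ (0 + 1) = 0 := by
    norm_num
  rw [h0, h1, add_zero, add_zero]
  refine Finset.sum_congr rfl fun j hj => ?_
  have hc := choose_shift k j
  have hc' : ((j : ℝ) + 2) * ((j : ℝ) + 1) * ((k + 2).choose (j + 2) : ℝ)
      = ((k : ℝ) + 2) * ((k : ℝ) + 1) * (k.choose j : ℝ) := by
    exact_mod_cast congrArg (fun n : ℕ => (n : ℝ)) hc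
  push_cast
  calc ((j : ℝ) + 1 + 1) * ((j : ℝ) + 1 + 1 - 1) * ((k + 2).choose (j + 1 + 1) : ℝ) * x ^ (j + 1 + 1)
      = (((j : ℝ) + 2) * ((j : ℝ) + 1) * ((k + 2).choose (j + 2) : ℝ)) * x ^ (j + 2) := by
        ring_nf
    _ = (((k : ℝ) + 2) * ((k : ℝ) + 1) * (k.choose j : ℝ)) * x ^ (j + 2) := by rw [hc']
    _ = ((k : ℝ) + 2) * ((k : ℝ) + 1) * x ^ 2 * ((k.choose j : ℝ) * x ^ j) := by ring

lemma vand (N m : ℕ) (h1 : 1 ≤ m) (hm : m ≤ N) :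
    ∑ s ∈ Finset.Icc 1 N, (N - m).choose s * (m - 1).choose (s - 1) = (N - 1).choose m := by
  have hadd : N - m + (m - 1) = N - 1 := by omega
  have key : (N - 1).choose m
      = ∑ i ∈ range (m + 1), (N - m).choose i * (m - 1).choose (m - i) := by
    rw [← hadd, Nat.add_choose_eq, Finset.Nat.sum_antidiagonal_eq_sum_range_succ_mk]
  rw [key, Finset.sum_range_succ']
  have h0 : (m - 1).choose (m - 0) = 0 := Nat.choose_eq_zero_of_lt (by omega)
  rw [h0, mul_zero, add_zero]
  have hsym : ∀ i ∈ range m, (N - m).choose (i + 1) * (m - 1).choose (m - (i + 1))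
      = (N - m).choose (i + 1) * (m - 1).choose i := by
    intro i hi
    rw [Finset.mem_range] at hi
    have : m - (i + 1) = (m - 1) - i := by omega
    rw [this, Nat.choose_symm (by omega)]
  rw [Finset.sum_congr rfl hsym]
  -- now reindex the LHS
  have hL : ∑ s ∈ Finset.Icc 1 N, (N - m).choose s * (m - 1).choose (s - 1)
      = ∑ i ∈ range N, (N - m).choose (1 + i) * (m - 1).choose (1 + i - 1) := by
    rw [← Finset.Ico_add_one_right_eq_Icc, Finset.sum_Ico_eq_sum_range]
    simp
  rw [hL]
  have hsub : range m ⊆ range N := Finset.range_subset_range.mpr hm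
  rw [← Finset.sum_subset hsub (fun i _ hi => ?_)]
  · refine Finset.sum_congr rfl fun i _ => ?_
    congr 1
    · congr 1; omega
    · congr 1; omega
  · rw [Finset.mem_range] at hi
    rw [Nat.choose_eq_zero_of_lt (show m - 1 < 1 + i - 1 by omega), mul_zero]

lemma wdim_zero {N s m : ℕ} (hs : 1 ≤ s) (hm : 1 ≤ m) (h : ¬(s ≤ m ∧ m + s ≤ N)) :
    Wdim N s m = 0 := by
  unfold Wdim
  rcases not_and_or.mp h with h' | h'
  · rw [Nat.choose_eq_zero_of_lt (show m - 1 < s - 1 by omega)]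
    simp
  · rw [Nat.choose_eq_zero_of_lt (show N - m < s by omega)]
    simp

/-- the second factorial moment of the total length of dimers
equals `(N-1)(N-2)/9` exactly. -/
theorem second_factorial_moment_total_length (N : ℕ) (hN : 1 ≤ N) :
    ∑ t ∈ Finset.Icc 1 N, ∑ s ∈ Finset.Icc 1 (t / 2),
        (((t : ℝ) - (s : ℝ)) * ((t : ℝ) - (s : ℝ) - 1) * Ptilde N s t)
      = ((N : ℝ) - 1) * ((N : ℝ) - 2) / 9 := by
  -- Step 1: replace summand by Wdim
  have h1 : ∀ t ∈ Finset.Icc 1 N, ∀ s ∈ Finset.Icc 1 (t / 2),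
      ((t : ℝ) - (s : ℝ)) * ((t : ℝ) - (s : ℝ) - 1) * Ptilde N s t = Wdim N s (t - s) := by
    intro t ht s hs
    rw [Finset.mem_Icc] at ht hs
    have hst : s ≤ t := by omega
    have hPt : Ptilde N s t = (2 / 3 : ℝ) ^ (N - 1) * ((N - t + s).choose s : ℝ)
        * ((t - s - 1).choose (s - 1) : ℝ) * (1 / 2 : ℝ) ^ (t - s) := by
      unfold Ptilde
      rw [if_neg (by omega), if_pos ⟨hs.1, hs.2, by omega, ht.2⟩]
    have hcast : (t : ℝ) - (s : ℝ) = ((t - s : ℕ) : ℝ) := by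
      push_cast [Nat.cast_sub hst]; ring
    have hNm : N - t + s = N - (t - s) := by omega
    have hm1 : t - s - 1 = (t - s) - 1 := rfl
    rw [hPt, hcast, hNm]
    unfold Wdim
    ring
  rw [Finset.sum_congr rfl fun t ht => Finset.sum_congr rfl fun s hs => h1 t ht s hs]
  -- Step 2: reindex to product over (m, s)
  rw [Finset.sum_sigma' (Finset.Icc 1 N) (fun t => Finset.Icc 1 (t / 2))
    (fun t s => Wdim N s (t - s))]
  have h2 : ∑ p ∈ (Finset.Icc 1 N).sigma (fun t => Finset.Icc 1 (t / 2)), Wdim N p.2 (p.1 - p.2)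
      = ∑ p ∈ ((Finset.Icc 1 N) ×ˢ (Finset.Icc 1 N)).filter
          (fun p => p.2 ≤ p.1 ∧ p.1 + p.2 ≤ N), Wdim N p.2 p.1 := by
    refine Finset.sum_nbij' (fun p => (p.1 - p.2, p.2)) (fun p => ⟨p.1 + p.2, p.2⟩)
      ?_ ?_ ?_ ?_ ?_
    · rintro ⟨t, s⟩ hp
      simp only [Finset.mem_sigma, Finset.mem_Icc] at hp
      simp only [Finset.mem_filter, Finset.mem_product, Finset.mem_Icc]
      omega
    · rintro ⟨m, s⟩ hp
      simp only [Finset.mem_filter, Finset.mem_product, Finset.mem_Icc] at hp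
      simp only [Finset.mem_sigma, Finset.mem_Icc]
      refine ⟨⟨by omega, by omega⟩, by omega, ?_⟩
      exact (Nat.le_div_iff_mul_le (by norm_num)).mpr (by omega)
    · rintro ⟨t, s⟩ hp
      simp only [Finset.mem_sigma, Finset.mem_Icc] at hp
      simp only [Sigma.mk.inj_iff]
      constructor
      · omega
      · exact HEq.rfl
    · rintro ⟨m, s⟩ hp
      simp only [Finset.mem_filter, Finset.mem_product, Finset.mem_Icc] at hp
      dsimp only
      simp only [Prod.mk.injEq]
      exact ⟨by omega, trivial⟩
    · rintro ⟨t, s⟩ _; rfl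
  rw [h2]
  have h3 : ∑ p ∈ ((Finset.Icc 1 N) ×ˢ (Finset.Icc 1 N)).filter
        (fun p => p.2 ≤ p.1 ∧ p.1 + p.2 ≤ N), Wdim N p.2 p.1
      = ∑ p ∈ (Finset.Icc 1 N) ×ˢ (Finset.Icc 1 N), Wdim N p.2 p.1 := by
    refine Finset.sum_subset (Finset.filter_subset _ _) ?_
    rintro ⟨m, s⟩ hp hnp
    simp only [Finset.mem_product, Finset.mem_Icc] at hp
    simp only [Finset.mem_filter, Finset.mem_product, Finset.mem_Icc, not_and] at hnp
    exact wdim_zero hp.2.1 hp.1.1 (by tauto)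
  rw [h3, Finset.sum_product]
  -- Step 3: Vandermonde on the inner sum
  have h4 : ∀ m ∈ Finset.Icc 1 N, ∑ s ∈ Finset.Icc 1 N, Wdim N s m
      = (m : ℝ) * ((m : ℝ) - 1) * (2 / 3 : ℝ) ^ (N - 1) * ((N - 1).choose m : ℝ)
        * (1 / 2 : ℝ) ^ m := by
    intro m hm
    rw [Finset.mem_Icc] at hm
    have : ∀ s ∈ Finset.Icc 1 N, Wdim N s m
        = (m : ℝ) * ((m : ℝ) - 1) * (2 / 3 : ℝ) ^ (N - 1) * (1 / 2 : ℝ) ^ m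
          * (((N - m).choose s * (m - 1).choose (s - 1) : ℕ) : ℝ) := by
      intro s _
      unfold Wdim
      push_cast
      ring
    rw [Finset.sum_congr rfl this, ← Finset.mul_sum, ← Nat.cast_sum, vand N m hm.1 hm.2]
    ring
  rw [Finset.sum_congr rfl h4]
  -- Step 4: evaluate the single sum
  have h5 : ∑ m ∈ Finset.Icc 1 N, (m : ℝ) * ((m : ℝ) - 1) * (2 / 3 : ℝ) ^ (N - 1)
        * ((N - 1).choose m : ℝ) * (1 / 2 : ℝ) ^ m
      = ∑ m ∈ range (N + 1), (m : ℝ) * ((m : ℝ) - 1) * (2 / 3 : ℝ) ^ (N - 1)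
        * ((N - 1).choose m : ℝ) * (1 / 2 : ℝ) ^ m := by
    refine Finset.sum_subset (fun x hx => ?_) (fun x hx hx' => ?_)
    · rw [Finset.mem_Icc] at hx; rw [Finset.mem_range]; omega
    · rw [Finset.mem_range] at hx
      rw [Finset.mem_Icc] at hx'
      have : x = 0 := by omega
      subst this
      norm_num
  rw [h5, Finset.sum_range_succ]
  have hNN : ((N - 1).choose N : ℝ) = 0 := by
    rw [Nat.choose_eq_zero_of_lt (by omega)]; norm_num
  rw [hNN]
  -- now case on N
  match N, hN with
  | 1, _ => norm_num
  | 2, _ => norm_num [Finset.sum_range_succ]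
  | (k + 3), _ =>
    have hsub : (k + 3 : ℕ) - 1 = k + 2 := by omega
    rw [hsub]
    have hpull : ∀ m ∈ range (k + 3),
        (m : ℝ) * ((m : ℝ) - 1) * (2 / 3 : ℝ) ^ (k + 2) * ((k + 2).choose m : ℝ)
          * (1 / 2 : ℝ) ^ m
        = (2 / 3 : ℝ) ^ (k + 2)
          * ((m : ℝ) * ((m : ℝ) - 1) * ((k + 2).choose m : ℝ) * (1 / 2 : ℝ) ^ m) := by
      intro m _; ring
    rw [Finset.sum_congr rfl hpull, ← Finset.mul_sum, sum_fact2 k (1 / 2 : ℝ)]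
    have hone : (2 / 3 : ℝ) ^ k * (3 / 2 : ℝ) ^ k = 1 := by
      rw [← mul_pow]; norm_num
    have hx : (1 + (1 / 2 : ℝ)) = 3 / 2 := by norm_num
    rw [hx]
    have hkey : (2 / 3 : ℝ) ^ (k + 2) * (3 / 2 : ℝ) ^ k = 4 / 9 := by
      rw [pow_add]
      calc (2 / 3 : ℝ) ^ k * (2 / 3 : ℝ) ^ 2 * (3 / 2 : ℝ) ^ k
          = ((2 / 3 : ℝ) ^ k * (3 / 2 : ℝ) ^ k) * (2 / 3 : ℝ) ^ 2 := by ring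
        _ = 4 / 9 := by rw [hone]; norm_num
    push_cast
    calc (2 / 3 : ℝ) ^ (k + 2) * (((k : ℝ) + 2) * ((k : ℝ) + 1) * (1 / 2 : ℝ) ^ 2
          * (3 / 2 : ℝ) ^ k) + ((k : ℝ) + 3) * (((k : ℝ) + 3) - 1) * (2 / 3 : ℝ) ^ (k + 2) * 0
          * (1 / 2 : ℝ) ^ (k + 3)
        = ((2 / 3 : ℝ) ^ (k + 2) * (3 / 2 : ℝ) ^ k) * (((k : ℝ) + 2) * ((k : ℝ) + 1) / 4) := by
          ring
      _ = ((k : ℝ) + 3 - 1) * ((k : ℝ) + 3 - 2) / 9 := by rw [hkey]; ring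
end

section
/- The mean number of dimers satisfies the recursive asymptotic relation: lim_{N→∞} [ E_N - ( N/3 - M_N + (2/3)·M_{N-1} ) ] = 0, where E_N := Σ_{t=1}^{N} Σ_{s=1}^{⌊t/2⌋} s · P̃_N(s,t) is the mean number of dimers and M_N := Σ_{t=1}^{N} Σ_{s=1}^{⌊t/2⌋} (t-s) · P̃_N(s,t) is the mean total length of dimers. -/
/-- `E_N`: the mean number of dimers. -/
noncomputable def dimerMean (N : ℕ) : ℝ :=
  ∑ t ∈ Finset.Icc 1 N, ∑ s ∈ Finset.Icc 1 (t / 2), (s : ℝ) * Ptilde N s t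

/-- `M_N`: the mean total length of dimers. -/
noncomputable def lengthMean (N : ℕ) : ℝ :=
  ∑ t ∈ Finset.Icc 1 N, ∑ s ∈ Finset.Icc 1 (t / 2), ((t : ℝ) - (s : ℝ)) * Ptilde N s t

open Finset

/-- the if-free weight formula -/
noncomputable def pw (N s t : ℕ) : ℝ :=
  (2 / 3 : ℝ) ^ (N - 1) * ((N - t + s).choose s : ℝ)
    * ((t - s - 1).choose (s - 1) : ℝ) * (1 / 2 : ℝ) ^ (t - s)

lemma V1 {s t : ℕ} (ht : 2 ≤ t) (hs : 1 ≤ s) (h : t < 2 * s) :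
    (t - s - 1).choose (s - 1) = 0 :=
  Nat.choose_eq_zero_of_lt (by omega)

lemma pw_zero {N s t : ℕ} (ht : 2 ≤ t) (hs : 1 ≤ s) (h : t < 2 * s) : pw N s t = 0 := by
  unfold pw; rw [V1 ht hs h]; simp

lemma sum_Icc_one {M : Type*} [AddCommMonoid M] (n : ℕ) (f : ℕ → M) :
    ∑ s ∈ Finset.Icc 1 n, f s = ∑ j ∈ Finset.range n, f (j + 1) := by
  rw [← Finset.Ico_add_one_right_eq_Icc, Finset.sum_Ico_eq_sum_range]
  simp [Nat.add_comm]

lemma transform (N : ℕ) (w : ℕ → ℕ → ℝ) :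
    ∑ t ∈ Icc 1 N, ∑ s ∈ Icc 1 (t / 2), w s t * Ptilde N s t
    = ∑ ℓ ∈ Icc 1 (N - 1), ∑ s ∈ Icc 1 N,
        w s (s + ℓ) * ((2 / 3 : ℝ) ^ (N - 1) * ((N - ℓ).choose s : ℝ)
          * ((ℓ - 1).choose (s - 1) : ℝ) * (1 / 2 : ℝ) ^ ℓ) := by
  have h1 : ∀ t ∈ Icc 2 N, ∑ s ∈ Icc 1 (t / 2), w s t * Ptilde N s t
      = ∑ s ∈ Icc 1 N, w s t * pw N s t := by
    intro t ht
    obtain ⟨ht2, htN⟩ := mem_Icc.mp ht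
    rw [Finset.sum_congr rfl (fun s hs => ?_)]
    · apply Finset.sum_subset
      · intro s hs
        obtain ⟨h1, h2⟩ := mem_Icc.mp hs
        exact mem_Icc.mpr ⟨h1, le_trans h2 (le_trans (Nat.div_le_self t 2) htN)⟩
      · intro s hs hns
        obtain ⟨h1, h2⟩ := mem_Icc.mp hs
        have h3 : t / 2 < s := by
          by_contra hc
          exact hns (mem_Icc.mpr ⟨h1, not_lt.mp hc⟩)
        have h4 : t < 2 * s := by
          have := (Nat.div_lt_iff_lt_mul (by norm_num : 0 < 2)).mp h3
          omega
        rw [pw_zero ht2 h1 h4, mul_zero]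
    · obtain ⟨h1, h2⟩ := mem_Icc.mp hs
      rw [Ptilde, if_neg (by omega), if_pos ⟨h1, h2, by omega, htN⟩]
      rfl
  have h0 : ∑ t ∈ Icc 1 N, ∑ s ∈ Icc 1 (t / 2), w s t * Ptilde N s t
      = ∑ t ∈ Icc 2 N, ∑ s ∈ Icc 1 (t / 2), w s t * Ptilde N s t := by
    symm
    apply Finset.sum_subset
    · exact Icc_subset_Icc_left one_le_two
    · intro t ht hnt
      have h1 := mem_Icc.mp ht
      have : t = 1 := by
        simp only [mem_Icc, not_and, not_le] at hnt
        omega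
      subst this
      simp
  rw [h0, Finset.sum_congr rfl h1, Finset.sum_comm]
  rw [Finset.sum_congr rfl (fun s hs => ?_), Finset.sum_comm]
  obtain ⟨hs1, hsN⟩ := mem_Icc.mp hs
  -- reduce Icc 2 N to Icc (2*s) N
  have step1 : ∑ t ∈ Icc 2 N, w s t * pw N s t = ∑ t ∈ Icc (2 * s) N, w s t * pw N s t := by
    symm
    apply Finset.sum_subset
    · intro t ht
      obtain ⟨a, b⟩ := mem_Icc.mp ht
      exact mem_Icc.mpr ⟨by omega, b⟩
    · intro t ht hnt
      obtain ⟨a, b⟩ := mem_Icc.mp ht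
      have : t < 2 * s := by
        simp only [mem_Icc, not_and, not_le] at hnt
        omega
      rw [pw_zero a hs1 this, mul_zero]
  rw [step1]
  have step2 : Icc (2 * s) N = (Icc s (N - s)).map (addRightEmbedding s) := by
    rw [Finset.map_add_right_Icc]
    congr 1 <;> omega
  rw [step2, Finset.sum_map]
  simp only [addRightEmbedding_apply]
  have step3 : ∀ ℓ ∈ Icc s (N - s),
      w s (ℓ + s) * pw N s (ℓ + s)
      = w s (s + ℓ) * ((2 / 3 : ℝ) ^ (N - 1) * ((N - ℓ).choose s : ℝ)
          * ((ℓ - 1).choose (s - 1) : ℝ) * (1 / 2 : ℝ) ^ ℓ) := by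
    intro ℓ hℓ
    obtain ⟨a, b⟩ := mem_Icc.mp hℓ
    have e1 : N - (ℓ + s) + s = N - ℓ := by omega
    have e2 : ℓ + s - s = ℓ := by omega
    have e3 : ℓ + s - s - 1 = ℓ - 1 := by omega
    unfold pw
    rw [e1, e3, e2, Nat.add_comm ℓ s]
  rw [Finset.sum_congr rfl step3]
  apply Finset.sum_subset
  · intro ℓ hℓ
    obtain ⟨a, b⟩ := mem_Icc.mp hℓ
    exact mem_Icc.mpr ⟨by omega, by omega⟩
  · intro ℓ hℓ hnl
    obtain ⟨a, b⟩ := mem_Icc.mp hℓ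
    simp only [mem_Icc, not_and, not_le] at hnl
    rcases lt_or_ge ℓ s with h | h
    · rw [Nat.choose_eq_zero_of_lt (show ℓ - 1 < s - 1 by omega)]
      simp
    · have : N - s < ℓ := hnl h
      rw [Nat.choose_eq_zero_of_lt (show N - ℓ < s by omega)]
      simp

lemma vdm_aux_s7 (m n : ℕ) : ∑ j ∈ range (n + 1), m.choose j * n.choose j = (m + n).choose n := by
  rw [Nat.add_choose_eq, Finset.Nat.sum_antidiagonal_eq_sum_range_succ_mk]
  apply Finset.sum_congr rfl
  intro j hj
  have hjn : j ≤ n := Nat.lt_succ_iff.mp (mem_range.mp hj)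
  rw [← Nat.choose_symm hjn]

lemma vdmA (N ℓ : ℕ) (h1 : 1 ≤ ℓ) (h2 : ℓ ≤ N - 1) (hN : 1 ≤ N) :
    ∑ s ∈ Icc 1 N, (N - ℓ).choose s * (ℓ - 1).choose (s - 1) = (N - 1).choose ℓ := by
  rw [sum_Icc_one]
  simp only [Nat.add_sub_cancel]
  have trunc : ∑ j ∈ range N, (N - ℓ).choose (j + 1) * (ℓ - 1).choose j
      = ∑ j ∈ range ℓ, (N - ℓ).choose (j + 1) * (ℓ - 1).choose j := by
    symm
    apply Finset.sum_subset
    · exact Finset.range_subset_range.mpr (by omega)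
    · intro j hj hnj
      have : ℓ ≤ j := by simpa using hnj
      rw [Nat.choose_eq_zero_of_lt (show ℓ - 1 < j by omega), mul_zero]
  rw [trunc]
  have key : (N - 1).choose ℓ = ((N - ℓ) + (ℓ - 1)).choose ℓ := by congr 1; omega
  rw [key, Nat.add_choose_eq, Finset.Nat.sum_antidiagonal_eq_sum_range_succ_mk,
    Finset.sum_range_succ']
  have z : (N - ℓ).choose 0 * (ℓ - 1).choose (ℓ - 0) = 0 := by
    rw [Nat.choose_eq_zero_of_lt (show ℓ - 1 < ℓ - 0 by omega), mul_zero]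
  rw [z, add_zero]
  apply Finset.sum_congr rfl
  intro j hj
  have hjl : j < ℓ := mem_range.mp hj
  congr 1
  rw [show ℓ - (j + 1) = (ℓ - 1) - j by omega, Nat.choose_symm (by omega)]

lemma vdmB (N ℓ : ℕ) (h1 : 1 ≤ ℓ) (h2 : ℓ ≤ N - 1) (hN : 1 ≤ N) :
    ∑ s ∈ Icc 1 N, s * ((N - ℓ).choose s * (ℓ - 1).choose (s - 1))
      = (N - ℓ) * (N - 2).choose (ℓ - 1) := by
  rw [sum_Icc_one]
  simp only [Nat.add_sub_cancel]
  have key : ∀ j : ℕ, (j + 1) * ((N - ℓ).choose (j + 1) * (ℓ - 1).choose j)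
      = (N - ℓ) * ((N - ℓ - 1).choose j * (ℓ - 1).choose j) := by
    intro j
    have h := Nat.add_one_mul_choose_eq (N - ℓ - 1) j
    rw [show N - ℓ - 1 + 1 = N - ℓ by omega] at h
    calc (j + 1) * ((N - ℓ).choose (j + 1) * (ℓ - 1).choose j)
        = ((N - ℓ).choose (j + 1) * (j + 1)) * (ℓ - 1).choose j := by ring
      _ = ((N - ℓ) * (N - ℓ - 1).choose j) * (ℓ - 1).choose j := by rw [h]
      _ = (N - ℓ) * ((N - ℓ - 1).choose j * (ℓ - 1).choose j) := by ring
  rw [Finset.sum_congr rfl (fun j _ => key j), ← Finset.mul_sum]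
  congr 1
  have trunc : ∑ j ∈ range N, (N - ℓ - 1).choose j * (ℓ - 1).choose j
      = ∑ j ∈ range ℓ, (N - ℓ - 1).choose j * (ℓ - 1).choose j := by
    symm
    apply Finset.sum_subset
    · exact Finset.range_subset_range.mpr (by omega)
    · intro j hj hnj
      have : ℓ ≤ j := by simpa using hnj
      rw [Nat.choose_eq_zero_of_lt (show ℓ - 1 < j by omega), mul_zero]
  rw [trunc, show range ℓ = range ((ℓ - 1) + 1) by congr 1; omega,
    vdm_aux_s7 (N - ℓ - 1) (ℓ - 1), show N - ℓ - 1 + (ℓ - 1) = N - 2 by omega]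

lemma rbinom1 (n : ℕ) : ∑ j ∈ range (n + 1), (n.choose j : ℝ) * (1 / 2 : ℝ) ^ j
    = (3 / 2 : ℝ) ^ n := by
  have h := add_pow (1 / 2 : ℝ) 1 n
  simp only [one_pow, mul_one] at h
  rw [show ((3 : ℝ) / 2) = (1 / 2 + 1 : ℝ) by norm_num, h]
  exact Finset.sum_congr rfl (fun j _ => by ring)

lemma rbinom2 (n : ℕ) : ∑ j ∈ range (n + 1), (j : ℝ) * (n.choose j : ℝ) * (1 / 2 : ℝ) ^ j
    = (n : ℝ) / 2 * (3 / 2 : ℝ) ^ (n - 1) := by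
  cases n with
  | zero => simp
  | succ m =>
    rw [Finset.sum_range_succ']
    have key : ∀ j : ℕ, ((j + 1 : ℕ) : ℝ) * ((m + 1).choose (j + 1) : ℝ) * (1 / 2 : ℝ) ^ (j + 1)
        = ((m : ℝ) + 1) * (1 / 2) * ((m.choose j : ℝ) * (1 / 2 : ℝ) ^ j) := by
      intro j
      have h := Nat.add_one_mul_choose_eq m j
      have h' : ((m + 1 : ℕ) : ℝ) * (m.choose j : ℝ)
          = ((m + 1).choose (j + 1) : ℝ) * ((j + 1 : ℕ) : ℝ) := by
        exact_mod_cast congrArg (fun x : ℕ => (x : ℝ)) h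
      push_cast at h' ⊢
      rw [pow_succ]
      linear_combination (-(1 / 2 : ℝ) * (1 / 2) ^ j) * h'
    rw [Finset.sum_congr rfl (fun j _ => key j)]
    simp only [Nat.cast_zero, zero_mul, add_zero]
    rw [← Finset.mul_sum, rbinom1 m]
    push_cast
    ring_nf

lemma lengthMean_eq (N : ℕ) (hN : 1 ≤ N) : lengthMean N = ((N : ℝ) - 1) / 3 := by
  have h := transform N (fun s t => (t : ℝ) - (s : ℝ))
  unfold lengthMean
  rw [h]
  have inner : ∀ ℓ ∈ Icc 1 (N - 1),
      ∑ s ∈ Icc 1 N, (((s + ℓ : ℕ) : ℝ) - (s : ℝ)) * ((2 / 3 : ℝ) ^ (N - 1)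
          * ((N - ℓ).choose s : ℝ) * ((ℓ - 1).choose (s - 1) : ℝ) * (1 / 2 : ℝ) ^ ℓ)
      = (ℓ : ℝ) * ((N - 1).choose ℓ : ℝ) * (1 / 2 : ℝ) ^ ℓ * (2 / 3 : ℝ) ^ (N - 1) := by
    intro ℓ hℓ
    obtain ⟨a, b⟩ := mem_Icc.mp hℓ
    have hterm : ∀ s ∈ Icc 1 N,
        (((s + ℓ : ℕ) : ℝ) - (s : ℝ)) * ((2 / 3 : ℝ) ^ (N - 1)
          * ((N - ℓ).choose s : ℝ) * ((ℓ - 1).choose (s - 1) : ℝ) * (1 / 2 : ℝ) ^ ℓ)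
        = ((ℓ : ℝ) * (1 / 2 : ℝ) ^ ℓ * (2 / 3 : ℝ) ^ (N - 1))
            * (((N - ℓ).choose s * (ℓ - 1).choose (s - 1) : ℕ) : ℝ) := by
      intro s hs
      push_cast
      ring
    rw [Finset.sum_congr rfl hterm, ← Finset.mul_sum, ← Nat.cast_sum, vdmA N ℓ a b hN]
    ring
  rw [Finset.sum_congr rfl inner]
  have ext : ∑ ℓ ∈ Icc 1 (N - 1),
        (ℓ : ℝ) * ((N - 1).choose ℓ : ℝ) * (1 / 2 : ℝ) ^ ℓ * (2 / 3 : ℝ) ^ (N - 1)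
      = ∑ ℓ ∈ range ((N - 1) + 1),
        (ℓ : ℝ) * ((N - 1).choose ℓ : ℝ) * (1 / 2 : ℝ) ^ ℓ * (2 / 3 : ℝ) ^ (N - 1) := by
    apply Finset.sum_subset
    · intro x hx
      obtain ⟨a, b⟩ := mem_Icc.mp hx
      exact mem_range.mpr (by omega)
    · intro x hx hnx
      have : x = 0 := by
        have := mem_range.mp hx
        simp only [mem_Icc, not_and, not_le] at hnx
        omega
      subst this
      simp
  rw [ext, ← Finset.sum_mul, rbinom2 (N - 1)]
  rcases (show N = 1 ∨ 2 ≤ N by omega) with rfl | h2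
  · norm_num
  · obtain ⟨M, rfl⟩ := Nat.exists_eq_add_of_le' h2
    simp only [show M + 2 - 1 = M + 1 from rfl, show M + 1 - 1 = M from rfl]
    have hp : (3 / 2 : ℝ) ^ M * (2 / 3 : ℝ) ^ (M + 1) = 2 / 3 := by
      rw [pow_succ, ← mul_assoc, ← mul_pow]
      norm_num
    rw [mul_assoc, hp]
    push_cast
    ring

lemma dimerMean_eq (N : ℕ) (hN : 2 ≤ N) : dimerMean N = (2 * (N : ℝ) - 1) / 9 := by
  have h := transform N (fun s _ => (s : ℝ))
  unfold dimerMean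
  rw [h]
  have inner : ∀ ℓ ∈ Icc 1 (N - 1),
      ∑ s ∈ Icc 1 N, (s : ℝ) * ((2 / 3 : ℝ) ^ (N - 1)
          * ((N - ℓ).choose s : ℝ) * ((ℓ - 1).choose (s - 1) : ℝ) * (1 / 2 : ℝ) ^ ℓ)
      = (2 / 3 : ℝ) ^ (N - 1) * (1 / 2 : ℝ) ^ ℓ
          * (((N - ℓ) * (N - 2).choose (ℓ - 1) : ℕ) : ℝ) := by
    intro ℓ hℓ
    obtain ⟨a, b⟩ := mem_Icc.mp hℓ
    have hterm : ∀ s ∈ Icc 1 N,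
        (s : ℝ) * ((2 / 3 : ℝ) ^ (N - 1)
          * ((N - ℓ).choose s : ℝ) * ((ℓ - 1).choose (s - 1) : ℝ) * (1 / 2 : ℝ) ^ ℓ)
        = ((2 / 3 : ℝ) ^ (N - 1) * (1 / 2 : ℝ) ^ ℓ)
            * ((s * ((N - ℓ).choose s * (ℓ - 1).choose (s - 1)) : ℕ) : ℝ) := by
      intro s hs
      push_cast
      ring
    rw [Finset.sum_congr rfl hterm, ← Finset.mul_sum, ← Nat.cast_sum,
      vdmB N ℓ a b (by omega)]
  rw [Finset.sum_congr rfl inner, sum_Icc_one]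
  simp only [Nat.add_sub_cancel]
  have hterm2 : ∀ j ∈ range (N - 1),
      (2 / 3 : ℝ) ^ (N - 1) * (1 / 2 : ℝ) ^ (j + 1)
          * (((N - (j + 1)) * (N - 2).choose j : ℕ) : ℝ)
      = ((2 / 3 : ℝ) ^ (N - 1) * (1 / 2 : ℝ)) * ((((N : ℝ) - 1)
          * (((N - 2).choose j : ℝ) * (1 / 2 : ℝ) ^ j))
          - ((j : ℝ) * ((N - 2).choose j : ℝ) * (1 / 2 : ℝ) ^ j)) := by
    intro j hj
    have hjN : j + 1 ≤ N := by have := mem_range.mp hj; omega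
    rw [Nat.cast_mul, Nat.cast_sub hjN, pow_succ]
    push_cast
    ring
  rw [Finset.sum_congr rfl hterm2, ← Finset.mul_sum, Finset.sum_sub_distrib,
    ← Finset.mul_sum, show N - 1 = (N - 2) + 1 by omega, rbinom1 (N - 2), rbinom2 (N - 2)]
  rcases (show N = 2 ∨ 3 ≤ N by omega) with rfl | h3
  · norm_num
  · obtain ⟨M, rfl⟩ := Nat.exists_eq_add_of_le' h3
    simp only [show M + 3 - 2 = M + 1 from rfl, show M + 1 - 1 = M from rfl,
      show M + 1 + 1 = M + 2 from rfl]
    have hxy : (2 / 3 : ℝ) ^ M * (3 / 2 : ℝ) ^ M = 1 := by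
      rw [← mul_pow]; norm_num
    push_cast
    rw [pow_succ, pow_succ, pow_succ]
    linear_combination ((2 * (M : ℝ) + 5) / 9) * hxy

/-- recursive asymptotic relation
`E_N ≍ N/3 - M_N + (2/3)·M_{N-1}` for the mean number of dimers. -/
theorem dimer_mean_recursion :
    Filter.Tendsto
      (fun N : ℕ => dimerMean N - ((N : ℝ) / 3 - lengthMean N + 2 / 3 * lengthMean (N - 1)))
      Filter.atTop (nhds 0) := by
  have h : (fun _ : ℕ => (0 : ℝ)) =ᶠ[Filter.atTop]
      (fun N : ℕ => dimerMean N - ((N : ℝ) / 3 - lengthMean N + 2 / 3 * lengthMean (N - 1))) := by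
    filter_upwards [Filter.eventually_ge_atTop 2] with N hN
    rw [dimerMean_eq N hN, lengthMean_eq N (by omega), lengthMean_eq (N - 1) (by omega)]
    rw [Nat.cast_sub (by omega : 1 ≤ N)]
    push_cast
    ring
  exact Filter.Tendsto.congr' h tendsto_const_nhds
end

section
/- The mean number of dimers is asymptotically (2N-1)/9: lim_{N→∞} [ Σ_{t=1}^{N} Σ_{s=1}^{⌊t/2⌋} s · P̃_N(s,t) - (2N-1)/9 ] = 0. -/
open Finset

lemma L1 (a b : ℕ) : ∑ j ∈ range (a+1), a.choose j * b.choose j = (a+b).choose a := by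
  rw [Nat.add_choose_eq, Finset.Nat.sum_antidiagonal_eq_sum_range_succ_mk,
    ← Finset.sum_range_reflect]
  refine Finset.sum_congr rfl fun j hj => ?_
  simp only [Finset.mem_range] at hj
  simp only []
  rw [show a + 1 - 1 - j = a - j from by omega, Nat.choose_symm (by omega)]

lemma L2 (n k : ℕ) (hk : 1 ≤ k) : k * n.choose k = n * (n-1).choose (k-1) := by
  obtain ⟨k', rfl⟩ : ∃ k', k = k' + 1 := ⟨k - 1, by omega⟩
  cases n with
  | zero => simp [Nat.choose_eq_zero_of_lt]
  | succ n' =>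
    have h := Nat.add_one_mul_choose_eq n' k'
    simp only [Nat.add_sub_cancel]
    rw [h]; exact Nat.mul_comm _ _

lemma L3 (n k : ℕ) : (n - k) * n.choose k = n * (n-1).choose k := by
  rcases Nat.lt_or_ge n k with h | h
  · rw [Nat.choose_eq_zero_of_lt h, Nat.choose_eq_zero_of_lt (by omega)]; simp
  · rcases Nat.eq_or_lt_of_le h with h | h
    · subst h
      rcases Nat.eq_zero_or_pos k with rfl | hn
      · simp
      · rw [Nat.sub_self, Nat.choose_eq_zero_of_lt (show k - 1 < k by omega)]; simp
    · have h2 := L2 n (n - k) (by omega)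
      rw [Nat.choose_symm (by omega)] at h2
      rw [h2]
      congr 1
      rw [← Nat.choose_symm (show n - k - 1 ≤ n - 1 by omega)]
      congr 1
      omega

lemma L4 (n : ℕ) : ∑ i ∈ range (n+1), n.choose i * 2^(n-i) = 3^n := by
  have h := add_pow (1 : ℕ) 2 n
  norm_num at h
  rw [h]
  exact Finset.sum_congr rfl fun i _ => Nat.mul_comm _ _


lemma L5 (n : ℕ) : (∑ i ∈ range (n+1), (n-i) * n.choose i * 2^(n-i)) * 3 = 2*n*3^n := by
  cases n with
  | zero => simp
  | succ m =>
    calc (∑ i ∈ range (m+2), (m+1-i) * (m+1).choose i * 2^(m+1-i)) * 3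
        = (∑ i ∈ range (m+2), (m+1) * (m.choose i * 2^(m+1-i))) * 3 := by
          refine congrArg (· * 3) (Finset.sum_congr rfl fun i _ => ?_)
          rw [← Nat.mul_assoc, L3 (m+1) i]
          simp [Nat.mul_assoc]
      _ = (∑ i ∈ range (m+1), (m+1) * (m.choose i * 2^(m+1-i))) * 3 := by
          rw [Finset.sum_range_succ, Nat.choose_eq_zero_of_lt (by omega)]
          simp
      _ = (m+1) * 2 * (∑ i ∈ range (m+1), m.choose i * 2^(m-i)) * 3 := by
          rw [← Finset.mul_sum, Finset.mul_sum, Finset.mul_sum]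
          refine congrArg (· * 3) (Finset.sum_congr rfl fun i hi => ?_)
          simp only [Finset.mem_range] at hi
          rw [show m + 1 - i = (m - i) + 1 from by omega, pow_succ]
          ring
      _ = 2*(m+1)*3^(m+1) := by
          rw [L4]
          ring


lemma L6 (n : ℕ) : (∑ i ∈ range (n+1), (n+1-i) * n.choose i * 2^(n-i)) * 9 = (2*n+3)*3^(n+1) := by
  have split : ∑ i ∈ range (n+1), (n+1-i) * n.choose i * 2^(n-i)
      = (∑ i ∈ range (n+1), (n-i) * n.choose i * 2^(n-i))
        + ∑ i ∈ range (n+1), n.choose i * 2^(n-i) := by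
    rw [← Finset.sum_add_distrib]
    refine Finset.sum_congr rfl fun i hi => ?_
    simp only [Finset.mem_range] at hi
    rw [show n + 1 - i = (n - i) + 1 from by omega]
    ring
  rw [split, L4 n, Nat.add_mul]
  have h5 := L5 n
  calc (∑ i ∈ range (n+1), (n-i) * n.choose i * 2^(n-i)) * 9 + 3^n * 9
      = (∑ i ∈ range (n+1), (n-i) * n.choose i * 2^(n-i)) * 3 * 3 + 3^n * 9 := by ring
    _ = 2*n*3^n*3 + 3^n*9 := by rw [h5]
    _ = (2*n+3)*3^(n+1) := by ring

lemma L7 (n b : ℕ) : ∑ s ∈ Ioc 0 n, s * n.choose s * b.choose (s-1)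
    = n * (n-1+b).choose (n-1) := by
  cases n with
  | zero => simp
  | succ m =>
    have hre : ∑ s ∈ Ioc 0 (m+1), s * (m+1).choose s * b.choose (s-1)
        = ∑ j ∈ range (m+1), (j+1) * (m+1).choose (j+1) * b.choose j := by
      refine Finset.sum_nbij' (fun s => s - 1) (fun j => j + 1) ?_ ?_ ?_ ?_ ?_
      · intro a ha; simp only [Finset.mem_Ioc] at ha; simp only [Finset.mem_range]; omega
      · intro a ha; simp only [Finset.mem_range] at ha; simp only [Finset.mem_Ioc]; omega
      · intro a ha; simp only [Finset.mem_Ioc] at ha; omega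
      · intro a ha; omega
      · intro a ha
        simp only [Finset.mem_Ioc] at ha
        rw [show a - 1 + 1 = a from by omega]
    rw [hre]
    have hterm : ∀ j ∈ range (m+1), (j+1) * (m+1).choose (j+1) * b.choose j
        = (m+1) * (m.choose j * b.choose j) := by
      intro j _
      rw [L2 (m+1) (j+1) (by omega)]
      simp [Nat.mul_assoc]
    rw [Finset.sum_congr rfl hterm, ← Finset.mul_sum, L1 m b]
    simp


lemma M (N : ℕ) (hN : 2 ≤ N) :
    (∑ t ∈ Icc 1 N, ∑ s ∈ Icc 1 (t/2),
        s * (N-t+s).choose s * (t-s-1).choose (s-1) * 2^(N-1-(t-s))) * 9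
      = (2*N-1) * 3^(N-1) := by
  -- Step ABC: rewrite each inner sum
  have step1 : ∀ t ∈ Icc 1 N,
      (∑ s ∈ Icc 1 (t/2), s * (N-t+s).choose s * (t-s-1).choose (s-1) * 2^(N-1-(t-s)))
      = ∑ m ∈ Icc 1 N, (t-m) * (N-m).choose (t-m) * (m-1).choose (t-m-1) * 2^(N-1-m) := by
    intro t ht
    simp only [Finset.mem_Icc] at ht
    -- extend to Icc 1 (t-1)
    have hA : (∑ s ∈ Icc 1 (t/2), s * (N-t+s).choose s * (t-s-1).choose (s-1) * 2^(N-1-(t-s)))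
        = ∑ s ∈ Icc 1 (t-1), s * (N-t+s).choose s * (t-s-1).choose (s-1) * 2^(N-1-(t-s)) := by
      refine Finset.sum_subset (Finset.Icc_subset_Icc_right (by omega)) ?_
      intro s hs hns
      simp only [Finset.mem_Icc] at hs hns
      have h2s : t < 2 * s := by omega
      rw [Nat.choose_eq_zero_of_lt (show t - s - 1 < s - 1 by omega)]
      simp
    -- reindex s ↦ t - s
    have hB : (∑ s ∈ Icc 1 (t-1), s * (N-t+s).choose s * (t-s-1).choose (s-1) * 2^(N-1-(t-s)))
        = ∑ m ∈ Icc 1 (t-1), (t-m) * (N-m).choose (t-m) * (m-1).choose (t-m-1) * 2^(N-1-m) := by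
      refine Finset.sum_nbij' (fun s => t - s) (fun m => t - m) ?_ ?_ ?_ ?_ ?_
      · intro a ha; simp only [Finset.mem_Icc] at ha ⊢; omega
      · intro a ha; simp only [Finset.mem_Icc] at ha ⊢; omega
      · intro a ha; simp only [Finset.mem_Icc] at ha; omega
      · intro a ha; simp only [Finset.mem_Icc] at ha; omega
      · intro s hs
        simp only [Finset.mem_Icc] at hs
        rw [show t - (t - s) = s from by omega, show N - (t - s) = N - t + s from by omega]
    -- extend to Icc 1 N
    have hC : (∑ m ∈ Icc 1 (t-1), (t-m) * (N-m).choose (t-m) * (m-1).choose (t-m-1) * 2^(N-1-m))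
        = ∑ m ∈ Icc 1 N, (t-m) * (N-m).choose (t-m) * (m-1).choose (t-m-1) * 2^(N-1-m) := by
      refine Finset.sum_subset (Finset.Icc_subset_Icc_right (by omega)) ?_
      intro m hm hnm
      simp only [Finset.mem_Icc] at hm hnm
      rw [show t - m = 0 from by omega]
      simp
    exact hA.trans (hB.trans hC)
  rw [Finset.sum_congr rfl step1, Finset.sum_comm]
  -- Step E: per m, collapse the t-sum
  have step2 : ∀ m ∈ Icc 1 N,
      (∑ t ∈ Icc 1 N, (t-m) * (N-m).choose (t-m) * (m-1).choose (t-m-1) * 2^(N-1-m))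
      = (N-m) * (N-2).choose (m-1) * 2^(N-1-m) := by
    intro m hm
    simp only [Finset.mem_Icc] at hm
    have hsplit : (∑ t ∈ Ioc 0 m, (t-m) * (N-m).choose (t-m) * (m-1).choose (t-m-1) * 2^(N-1-m))
        + (∑ t ∈ Ioc m N, (t-m) * (N-m).choose (t-m) * (m-1).choose (t-m-1) * 2^(N-1-m))
        = ∑ t ∈ Ioc 0 N, (t-m) * (N-m).choose (t-m) * (m-1).choose (t-m-1) * 2^(N-1-m) :=
      Finset.sum_Ioc_consecutive _ (by omega) (by omega)
    have hzero : (∑ t ∈ Ioc 0 m, (t-m) * (N-m).choose (t-m) * (m-1).choose (t-m-1) * 2^(N-1-m)) = 0 := by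
      refine Finset.sum_eq_zero fun t ht => ?_
      simp only [Finset.mem_Ioc] at ht
      rw [show t - m = 0 from by omega]
      simp
    have hre : (∑ t ∈ Ioc m N, (t-m) * (N-m).choose (t-m) * (m-1).choose (t-m-1) * 2^(N-1-m))
        = ∑ s ∈ Ioc 0 (N-m), s * (N-m).choose s * (m-1).choose (s-1) * 2^(N-1-m) := by
      refine Finset.sum_nbij' (fun t => t - m) (fun s => s + m) ?_ ?_ ?_ ?_ ?_
      · intro a ha; simp only [Finset.mem_Ioc] at ha ⊢; omega
      · intro a ha; simp only [Finset.mem_Ioc] at ha ⊢; omega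
      · intro a ha; simp only [Finset.mem_Ioc] at ha; omega
      · intro a ha; simp only [Finset.mem_Ioc] at ha; omega
      · intro a ha; rfl
    have hL7 : (∑ s ∈ Ioc 0 (N-m), s * (N-m).choose s * (m-1).choose (s-1))
        = (N-m) * ((N-m-1)+(m-1)).choose (N-m-1) := L7 (N-m) (m-1)
    have hsum : (∑ s ∈ Ioc 0 (N-m), s * (N-m).choose s * (m-1).choose (s-1) * 2^(N-1-m))
        = (N-m) * ((N-m-1)+(m-1)).choose (N-m-1) * 2^(N-1-m) := by
      rw [← Finset.sum_mul, hL7]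
    rw [show Icc 1 N = Ioc 0 N from Finset.Icc_add_one_left_eq_Ioc 0 N, ← hsplit, hzero, Nat.zero_add,
      hre, hsum]
    -- now fix the choose term
    rcases Nat.lt_or_ge m N with hmN | hmN
    · rw [show N - m - 1 + (m-1) = N - 2 from by omega,
        show N - m - 1 = N - 2 - (m - 1) from by omega,
        Nat.choose_symm (by omega)]
    · rw [show N - m = 0 from by omega]
      simp
  rw [Finset.sum_congr rfl step2]
  -- Step G: reindex to range and apply L6
  have hre2 : (∑ m ∈ Icc 1 N, (N-m) * (N-2).choose (m-1) * 2^(N-1-m))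
      = ∑ i ∈ range N, (N-1-i) * (N-2).choose i * 2^(N-2-i) := by
    refine Finset.sum_nbij' (fun m => m - 1) (fun i => i + 1) ?_ ?_ ?_ ?_ ?_
    · intro a ha; simp only [Finset.mem_Icc] at ha; simp only [Finset.mem_range]; omega
    · intro a ha; simp only [Finset.mem_range] at ha; simp only [Finset.mem_Icc]; omega
    · intro a ha; simp only [Finset.mem_Icc] at ha; omega
    · intro a ha; omega
    · intro a ha
      simp only [Finset.mem_Icc] at ha
      rw [show N - 1 - (a - 1) = N - a from by omega, show N - 2 - (a - 1) = N - 1 - a from by omega]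
  rw [hre2]
  obtain ⟨n, rfl⟩ : ∃ n, N = n + 2 := ⟨N - 2, by omega⟩
  have hpeel : (∑ i ∈ range (n+2), (n+2-1-i) * (n+2-2).choose i * 2^(n+2-2-i))
      = ∑ i ∈ range (n+1), (n+1-i) * n.choose i * 2^(n-i) := by
    rw [Finset.sum_range_succ, Nat.choose_eq_zero_of_lt (by omega)]
    simp only [Nat.mul_zero, Nat.zero_mul, Nat.mul_one, Nat.add_zero]
    refine (Finset.sum_congr rfl fun i hi => ?_)
    simp only [Finset.mem_range] at hi
    rw [show n+2-1-i = n+1-i from by omega, show n+2-2 = n from by omega]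
  rw [hpeel, L6 n]
  rw [show 2*(n+2)-1 = 2*n+3 from by omega, show n+2-1 = n+1 from by omega]


lemma key (N : ℕ) (hN : 2 ≤ N) :
    (∑ t ∈ Finset.Icc 1 N, ∑ s ∈ Finset.Icc 1 (t / 2), (s : ℝ) * Ptilde N s t)
      = (2 * (N : ℝ) - 1) / 9 := by
  have hG : (∑ t ∈ Finset.Icc 1 N, ∑ s ∈ Finset.Icc 1 (t / 2), (s : ℝ) * Ptilde N s t)
      = ((∑ t ∈ Icc 1 N, ∑ s ∈ Icc 1 (t/2),
          s * (N-t+s).choose s * (t-s-1).choose (s-1) * 2^(N-1-(t-s)) : ℕ) : ℝ) / 3^(N-1) := by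
    push_cast
    rw [Finset.sum_div]
    refine Finset.sum_congr rfl fun t ht => ?_
    rw [Finset.sum_div]
    refine Finset.sum_congr rfl fun s hs => ?_
    simp only [Finset.mem_Icc] at ht hs
    rw [Ptilde, if_neg (by omega), if_pos (by omega)]
    have h3 : (3:ℝ)^(N-1) ≠ 0 := by positivity
    have h2 : (2:ℝ)^(t-s) ≠ 0 := by positivity
    have hexp : (2:ℝ)^(N-1-(t-s)) * 2^(t-s) = 2^(N-1) := by
      rw [← pow_add]; congr 1; omega
    field_simp
    rw [div_pow, div_pow, one_pow, ← hexp]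
    field_simp
  rw [hG]
  have hM := M N hN
  have hMr : ((∑ t ∈ Icc 1 N, ∑ s ∈ Icc 1 (t/2),
      s * (N-t+s).choose s * (t-s-1).choose (s-1) * 2^(N-1-(t-s)) : ℕ) : ℝ) * 9
      = (2 * (N:ℝ) - 1) * 3^(N-1) := by
    have h := congrArg (Nat.cast (R := ℝ)) hM
    rw [Nat.cast_mul, Nat.cast_mul, Nat.cast_sub (show 1 ≤ 2*N by omega), Nat.cast_pow] at h
    norm_num at h ⊢
    convert h using 2
  have h3 : (3:ℝ)^(N-1) ≠ 0 := by positivity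
  rw [div_eq_div_iff h3 (by norm_num : (9:ℝ) ≠ 0)]
  exact hMr


/-- the mean number of dimers is asymptotically `(2N-1)/9`. -/
theorem dimer_mean_asymptotics :
    Filter.Tendsto
      (fun N : ℕ =>
        (∑ t ∈ Finset.Icc 1 N, ∑ s ∈ Finset.Icc 1 (t / 2), (s : ℝ) * Ptilde N s t)
          - (2 * (N : ℝ) - 1) / 9)
      Filter.atTop (nhds 0) := by
  have h : ∀ N : ℕ, 2 ≤ N →
      (∑ t ∈ Finset.Icc 1 N, ∑ s ∈ Finset.Icc 1 (t / 2), (s : ℝ) * Ptilde N s t)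
        - (2 * (N : ℝ) - 1) / 9 = 0 := by
    intro N hN
    rw [key N hN]
    ring
  refine Filter.Tendsto.congr' ?_ tendsto_const_nhds
  filter_upwards [Filter.eventually_atTop.2 ⟨2, fun N hN => h N hN⟩] with N hN
  exact hN.symm
end

section
/- The second factorial moment of the number of dimers satisfies the recursive asymptotic relation: lim_{N→∞} [ F_N - ( N(N-1)/9 - 2(N-1)·( M_N - (4/3)·M_{N-1} + (4/9)·M_{N-2} ) + G_N - (4/3)·G_{N-1} + (4/9)·G_{N-2} ) ] = 0, where F_N := Σ_{t=1}^{N} Σ_{s=1}^{⌊t/2⌋} s(s-1)·P̃_N(s,t), M_N := Σ_{t=1}^{N} Σ_{s=1}^{⌊t/2⌋} (t-s)·P̃_N(s,t), and G_N := Σ_{t=1}^{N} Σ_{s=1}^{⌊t/2⌋} (t-s)(t-s-1)·P̃_N(s,t). -/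
open Finset


lemma lem_mul (a s : ℕ) (hs : 1 ≤ s) :
    s * a.choose s = a * (a - 1).choose (s - 1) := by
  rcases a with _ | n
  · simp [Nat.choose_eq_zero_of_lt (by omega : 0 < s)]
  · obtain ⟨k, rfl⟩ : ∃ k, s = k + 1 := ⟨s - 1, by omega⟩
    simpa [mul_comm] using (Nat.add_one_mul_choose_eq n k).symm

lemma lem_sub (a j : ℕ) : (a - j) * a.choose j = a * (a - 1).choose j := by
  rcases le_or_gt a j with h | h
  · rw [show a - j = 0 by omega, zero_mul]
    rcases Nat.eq_zero_or_pos a with rfl | ha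
    · simp
    · rw [Nat.choose_eq_zero_of_lt (by omega), mul_zero]
  · have h1 : a.choose j = a.choose (a - j) := by
      rw [← Nat.choose_symm (le_of_lt h)]
    rw [h1, lem_mul a (a - j) (by omega)]
    congr 1
    have h2 : j = (a - 1) - ((a - j) - 1) := by omega
    conv_rhs => rw [h2]
    rw [Nat.choose_symm (by omega)]

lemma lem2 (a s : ℕ) (hs : 2 ≤ s) :
    s * (s - 1) * a.choose s = a * (a - 1) * (a - 2).choose (s - 2) := by
  have h1 := lem_mul a s (by omega)
  have h2 := lem_mul (a - 1) (s - 1) (by omega)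
  rw [show a - 1 - 1 = a - 2 by omega, show s - 1 - 1 = s - 2 by omega] at h2
  calc s * (s - 1) * a.choose s = (s - 1) * (s * a.choose s) := by ring
    _ = (s - 1) * (a * (a - 1).choose (s - 1)) := by rw [h1]
    _ = a * ((s - 1) * (a - 1).choose (s - 1)) := by ring
    _ = a * ((a - 1) * (a - 2).choose (s - 2)) := by rw [h2]
    _ = a * (a - 1) * (a - 2).choose (s - 2) := by ring

lemma vand_s10 (A B n : ℕ) :
    ∑ k ∈ range (n + 1), A.choose k * B.choose (n - k) = (A + B).choose n := by
  rw [Nat.add_choose_eq, Finset.Nat.sum_antidiagonal_eq_sum_range_succ_mk]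

lemma vanderIcc (a m : ℕ) (hm : 1 ≤ m) :
    ∑ s ∈ Icc 1 m, a.choose s * (m - 1).choose (s - 1) = (a + (m - 1)).choose m := by
  rw [← vand_s10 a (m - 1) m]
  rw [show range (m + 1) = insert 0 (Icc 1 m) by ext x; simp; omega,
    Finset.sum_insert (by simp)]
  rw [Nat.choose_eq_zero_of_lt (by omega : m - 1 < m - 0)]
  simp only [mul_zero, zero_add]
  refine Finset.sum_congr rfl fun s hs => ?_
  simp only [mem_Icc] at hs
  congr 1
  have : m - s = (m - 1) - (s - 1) := by omega
  rw [this, Nat.choose_symm (by omega)]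

lemma innerF (a m : ℕ) (hm : 2 ≤ m) :
    ∑ s ∈ Icc 1 m, s * (s - 1) * a.choose s * (m - 1).choose (s - 1)
      = a * (a - 1) * ((a + m) - 3).choose (m - 2) := by
  rw [show Icc 1 m = insert 1 (Icc 2 m) by ext x; simp; omega,
    Finset.sum_insert (by simp)]
  simp only [Nat.sub_self, mul_zero, zero_mul, one_mul, zero_add]
  have key : ∀ s ∈ Icc 2 m, s * (s - 1) * a.choose s * (m - 1).choose (s - 1)
      = a * (a - 1) * ((a - 2).choose (s - 2) * (m - 1).choose ((m - 2) - (s - 2))) := by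
    intro s hs
    simp only [mem_Icc] at hs
    rw [lem2 a s hs.1]
    have h3 : (m - 2) - (s - 2) = (m - 1) - (s - 1) := by omega
    rw [h3, Nat.choose_symm (by omega)]
    ring
  rw [Finset.sum_congr rfl key, ← Finset.mul_sum]
  rcases Nat.lt_or_ge a 2 with ha | ha
  · interval_cases a <;> simp
  · congr 1
    rw [show Icc 2 m = Ico 2 (m + 1) by rw [Finset.Ico_add_one_right_eq_Icc],
      Finset.sum_Ico_eq_sum_range]
    simp only [show m + 1 - 2 = (m - 2) + 1 by omega]
    have hc : ∀ i, (a - 2).choose (2 + i - 2) * (m - 1).choose ((m - 2) - (2 + i - 2))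
        = (a - 2).choose i * (m - 1).choose ((m - 2) - i) := by
      intro i; congr 2 <;> omega
    rw [Finset.sum_congr rfl fun i _ => hc i, vand_s10]
    congr 1
    omega

lemma lem3 (K j : ℕ) :
    (K + 3 - j) * ((K + 2 - j) * (K + 2).choose j)
      = (K + 2) * ((K + 1) * K.choose j) + 2 * ((K + 2) * (K + 1).choose j) := by
  rw [lem_sub (K + 2) j]
  simp only [show K + 2 - 1 = K + 1 from rfl]
  rcases le_or_gt j (K + 1) with h | h
  · rw [show K + 3 - j = (K + 1 - j) + 2 by omega]
    have h2 : (K + 1 - j) * (K + 1).choose j = (K + 1) * K.choose j := by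
      have := lem_sub (K + 1) j
      simpa using this
    calc ((K + 1 - j) + 2) * ((K + 2) * (K + 1).choose j)
        = (K + 2) * ((K + 1 - j) * (K + 1).choose j) + 2 * ((K + 2) * (K + 1).choose j) := by
          ring
      _ = (K + 2) * ((K + 1) * K.choose j) + 2 * ((K + 2) * (K + 1).choose j) := by rw [h2]
  · rw [Nat.choose_eq_zero_of_lt h, Nat.choose_eq_zero_of_lt (by omega)]
    simp

lemma geom (A L : ℕ) (h : A < L) :
    ∑ j ∈ range L, (A.choose j : ℝ) * (1 / 2 : ℝ) ^ j = (3 / 2 : ℝ) ^ A := by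
  have := add_pow (1 / 2 : ℝ) 1 A
  simp only [one_pow, mul_one] at this
  rw [show (3 / 2 : ℝ) = 1 / 2 + 1 by norm_num, this]
  rw [← Finset.sum_subset (Finset.range_subset_range.2 (by omega : A + 1 ≤ L))]
  · exact Finset.sum_congr rfl fun j _ => by ring
  · intro x _ hx
    simp only [Finset.mem_range, not_lt] at hx
    rw [Nat.choose_eq_zero_of_lt (by omega)]
    simp


lemma Ptilde_zero (N s t : ℕ) (h : N < t) : Ptilde N s t = 0 := by
  unfold Ptilde
  rw [if_neg (by omega), if_neg (by omega)]

lemma Ptilde_eq (N s m : ℕ) (hs : 1 ≤ s) (hsm : s ≤ m) :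
    Ptilde N s (s + m) = (2 / 3 : ℝ) ^ (N - 1) * ((N - m).choose s : ℝ)
      * ((m - 1).choose (s - 1) : ℝ) * (1 / 2 : ℝ) ^ m := by
  unfold Ptilde
  rw [if_neg (by omega)]
  rcases le_or_gt (s + m) N with hN | hN
  · rw [if_pos (by constructor; omega; constructor; omega; omega)]
    rw [show N - (s + m) + s = N - m by omega, show s + m - s = m by omega]
  · rw [if_neg (by omega)]
    rw [Nat.choose_eq_zero_of_lt (show N - m < s by omega)]
    simp

lemma reindex (N : ℕ) (f : ℕ → ℕ → ℝ) (hf : ∀ s t, N < t → f s t = 0) :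
    ∑ t ∈ Icc 1 N, ∑ s ∈ Icc 1 (t / 2), f s t
      = ∑ m ∈ Icc 1 N, ∑ s ∈ Icc 1 m, f s (s + m) := by
  rw [Finset.sum_sigma', Finset.sum_sigma']
  conv_rhs => rw [← Finset.sum_filter_of_ne
    (p := fun p : (_ : ℕ) × ℕ => p.1 + p.2 ≤ N)
    (fun p _ hne => by
      by_contra h
      exact hne (hf p.2 (p.2 + p.1) (by omega)))]
  refine Finset.sum_nbij' (fun p => ⟨p.1 - p.2, p.2⟩) (fun p => ⟨p.2 + p.1, p.2⟩)
    ?_ ?_ ?_ ?_ ?_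
  · rintro ⟨t, s⟩ h
    simp only [mem_sigma, mem_Icc, mem_filter] at h ⊢
    omega
  · rintro ⟨m, s⟩ h
    simp only [mem_sigma, mem_Icc, mem_filter] at h ⊢
    omega
  · rintro ⟨t, s⟩ h
    simp only [mem_sigma, mem_Icc] at h
    have h1 : s + (t - s) = t := by omega
    simp only [h1]
  · rintro ⟨m, s⟩ h
    simp only [mem_filter, mem_sigma, mem_Icc] at h
    have h1 : s + m - s = m := by omega
    simp only [h1]
  · rintro ⟨t, s⟩ h
    simp only [mem_sigma, mem_Icc] at h
    have h1 : s + (t - s) = t := by omega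
    rw [h1]


/-- `F_N`: the second factorial moment of the number of dimers. -/
noncomputable def dimerSecondFactorial (N : ℕ) : ℝ :=
  ∑ t ∈ Finset.Icc 1 N, ∑ s ∈ Finset.Icc 1 (t / 2), (s : ℝ) * ((s : ℝ) - 1) * Ptilde N s t

/-- `G_N`: the second factorial moment of the total length of dimers. -/
noncomputable def lengthSecondFactorial (N : ℕ) : ℝ :=
  ∑ t ∈ Finset.Icc 1 N, ∑ s ∈ Finset.Icc 1 (t / 2),
    ((t : ℝ) - (s : ℝ)) * ((t : ℝ) - (s : ℝ) - 1) * Ptilde N s t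

lemma pow23 (n : ℕ) : (2 / 3 : ℝ) ^ n * (3 / 2 : ℝ) ^ n = 1 := by
  rw [← mul_pow]; norm_num

lemma Mform (K : ℕ) : lengthMean (K + 5) = ((K : ℝ) + 4) / 3 := by
  unfold lengthMean
  rw [reindex (K + 5) (fun s t => ((t : ℝ) - s) * Ptilde (K + 5) s t)
    (fun s t ht => by
      show ((t : ℝ) - s) * Ptilde (K + 5) s t = 0
      rw [Ptilde_zero _ _ _ ht, mul_zero])]
  have step : ∀ m ∈ Icc 1 (K + 5),
      (∑ s ∈ Icc 1 m, (((s + m : ℕ) : ℝ) - (s : ℝ)) * Ptilde (K + 5) s (s + m))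
        = (2 / 3 : ℝ) ^ (K + 4) * ((K : ℝ) + 4)
            * ((1 / 2 : ℝ) ^ m * ((K + 3).choose (m - 1) : ℝ)) := by
    intro m hm
    simp only [mem_Icc] at hm
    have h1 : ∀ s ∈ Icc 1 m, (((s + m : ℕ) : ℝ) - (s : ℝ)) * Ptilde (K + 5) s (s + m)
        = (2 / 3 : ℝ) ^ (K + 4) * (1 / 2 : ℝ) ^ m * (m : ℝ)
            * (((K + 5 - m).choose s * (m - 1).choose (s - 1) : ℕ) : ℝ) := by
      intro s hs
      simp only [mem_Icc] at hs
      rw [Ptilde_eq (K + 5) s m hs.1 hs.2, show K + 5 - 1 = K + 4 from rfl]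
      push_cast
      ring
    rw [Finset.sum_congr rfl h1, ← Finset.mul_sum, ← Nat.cast_sum]
    rw [vanderIcc (K + 5 - m) m hm.1, show K + 5 - m + (m - 1) = K + 4 by omega]
    have h2 := lem_mul (K + 4) m hm.1
    rw [show K + 4 - 1 = K + 3 from rfl] at h2
    have h3 := congrArg (fun n : ℕ => (n : ℝ)) h2
    push_cast at h3
    calc (2 / 3 : ℝ) ^ (K + 4) * (1 / 2 : ℝ) ^ m * (m : ℝ) * ((K + 4).choose m : ℝ)
        = (2 / 3 : ℝ) ^ (K + 4) * (1 / 2 : ℝ) ^ m * ((m : ℝ) * ((K + 4).choose m : ℝ)) := by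
          ring
      _ = (2 / 3 : ℝ) ^ (K + 4) * (1 / 2 : ℝ) ^ m
            * (((K : ℝ) + 4) * ((K + 3).choose (m - 1) : ℝ)) := by rw [h3]
      _ = (2 / 3 : ℝ) ^ (K + 4) * ((K : ℝ) + 4)
            * ((1 / 2 : ℝ) ^ m * ((K + 3).choose (m - 1) : ℝ)) := by ring
  rw [Finset.sum_congr rfl step, ← Finset.mul_sum]
  rw [show Icc 1 (K + 5) = Ico 1 (K + 6) by rw [← Finset.Ico_add_one_right_eq_Icc]; rfl,
    Finset.sum_Ico_eq_sum_range, show K + 6 - 1 = K + 5 from rfl]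
  have h4 : ∀ i ∈ range (K + 5), (1 / 2 : ℝ) ^ (1 + i) * ((K + 3).choose (1 + i - 1) : ℝ)
      = (1 / 2 : ℝ) * (((K + 3).choose i : ℝ) * (1 / 2 : ℝ) ^ i) := by
    intro i _
    rw [show 1 + i - 1 = i by omega]
    ring
  rw [Finset.sum_congr rfl h4, ← Finset.mul_sum, geom (K + 3) (K + 5) (by omega)]
  have hp := pow23 (K + 3)
  have : (2 / 3 : ℝ) ^ (K + 4) = (2 / 3 : ℝ) ^ (K + 3) * (2 / 3) := by rw [← pow_succ]
  rw [this]
  linear_combination (((K : ℝ) + 4) / 3) * hp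

lemma Gform (K : ℕ) : lengthSecondFactorial (K + 5) = ((K : ℝ) + 4) * ((K : ℝ) + 3) / 9 := by
  unfold lengthSecondFactorial
  rw [reindex (K + 5) (fun s t => ((t : ℝ) - s) * ((t : ℝ) - s - 1) * Ptilde (K + 5) s t)
    (fun s t ht => by
      show ((t : ℝ) - s) * ((t : ℝ) - s - 1) * Ptilde (K + 5) s t = 0
      rw [Ptilde_zero _ _ _ ht, mul_zero])]
  have step : ∀ m ∈ Icc 1 (K + 5),
      (∑ s ∈ Icc 1 m, (((s + m : ℕ) : ℝ) - s) * (((s + m : ℕ) : ℝ) - s - 1)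
          * Ptilde (K + 5) s (s + m))
        = (2 / 3 : ℝ) ^ (K + 4) * ((m : ℝ) * ((m : ℝ) - 1))
            * ((1 / 2 : ℝ) ^ m * ((K + 4).choose m : ℝ)) := by
    intro m hm
    simp only [mem_Icc] at hm
    have h1 : ∀ s ∈ Icc 1 m, (((s + m : ℕ) : ℝ) - s) * (((s + m : ℕ) : ℝ) - s - 1)
          * Ptilde (K + 5) s (s + m)
        = (2 / 3 : ℝ) ^ (K + 4) * (1 / 2 : ℝ) ^ m * ((m : ℝ) * ((m : ℝ) - 1))
            * (((K + 5 - m).choose s * (m - 1).choose (s - 1) : ℕ) : ℝ) := by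
      intro s hs
      simp only [mem_Icc] at hs
      rw [Ptilde_eq (K + 5) s m hs.1 hs.2, show K + 5 - 1 = K + 4 from rfl]
      push_cast
      ring
    rw [Finset.sum_congr rfl h1, ← Finset.mul_sum, ← Nat.cast_sum]
    rw [vanderIcc (K + 5 - m) m hm.1, show K + 5 - m + (m - 1) = K + 4 by omega]
    ring
  rw [Finset.sum_congr rfl step]
  rw [show Icc 1 (K + 5) = insert 1 (Icc 2 (K + 5)) by ext x; simp; omega,
    Finset.sum_insert (by simp)]
  norm_num
  have step2 : ∀ m ∈ Icc 2 (K + 5),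
      (2 / 3 : ℝ) ^ (K + 4) * ((m : ℝ) * ((m : ℝ) - 1))
          * ((1 / 2 : ℝ) ^ m * ((K + 4).choose m : ℝ))
        = (2 / 3 : ℝ) ^ (K + 4) * (((K : ℝ) + 4) * ((K : ℝ) + 3))
            * ((1 / 2 : ℝ) ^ m * ((K + 2).choose (m - 2) : ℝ)) := by
    intro m hm
    simp only [mem_Icc] at hm
    have h2 := lem2 (K + 4) m hm.1
    rw [show K + 4 - 1 = K + 3 from rfl, show K + 4 - 2 = K + 2 from rfl] at h2
    have h3 := congrArg (fun n : ℕ => (n : ℝ)) h2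
    push_cast [Nat.cast_sub (show 1 ≤ m by omega)] at h3
    linear_combination ((2 / 3 : ℝ) ^ (K + 4) * (1 / 2 : ℝ) ^ m) * h3
  rw [Finset.sum_congr rfl step2, ← Finset.mul_sum]
  rw [show Icc 2 (K + 5) = Ico 2 (K + 6) by rw [← Finset.Ico_add_one_right_eq_Icc]; rfl,
    Finset.sum_Ico_eq_sum_range, show K + 6 - 2 = K + 4 from rfl]
  have h4 : ∀ i ∈ range (K + 4), (1 / 2 : ℝ) ^ (2 + i) * ((K + 2).choose (2 + i - 2) : ℝ)
      = (1 / 4 : ℝ) * (((K + 2).choose i : ℝ) * (1 / 2 : ℝ) ^ i) := by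
    intro i _
    rw [show 2 + i - 2 = i by omega, pow_add]
    ring
  rw [Finset.sum_congr rfl h4, ← Finset.mul_sum, geom (K + 2) (K + 4) (by omega)]
  have hp := pow23 (K + 2)
  rw [show K + 4 = (K + 2) + 2 from rfl, pow_add]
  linear_combination ((2 / 3 : ℝ) ^ 2 * (((K : ℝ) + 4) * ((K : ℝ) + 3)) / 4) * hp

lemma Fform (K : ℕ) :
    dimerSecondFactorial (K + 5) = 4 * ((K : ℝ) + 2) * ((K : ℝ) + 4) / 81 := by
  unfold dimerSecondFactorial
  rw [reindex (K + 5) (fun s t => (s : ℝ) * ((s : ℝ) - 1) * Ptilde (K + 5) s t)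
    (fun s t ht => by
      show (s : ℝ) * ((s : ℝ) - 1) * Ptilde (K + 5) s t = 0
      rw [Ptilde_zero _ _ _ ht, mul_zero])]
  rw [show Icc 1 (K + 5) = insert 1 (Icc 2 (K + 5)) by ext x; simp; omega,
    Finset.sum_insert (by simp)]
  have hterm1 : (∑ s ∈ Icc (1:ℕ) 1, (s : ℝ) * ((s : ℝ) - 1) * Ptilde (K + 5) s (s + 1)) = 0 := by
    norm_num
  rw [hterm1, zero_add]
  have step : ∀ m ∈ Icc 2 (K + 5),
      (∑ s ∈ Icc 1 m, (s : ℝ) * ((s : ℝ) - 1) * Ptilde (K + 5) s (s + m))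
        = (2 / 3 : ℝ) ^ (K + 4)
            * ((1 / 2 : ℝ) ^ m
              * (((K + 5 - m) * ((K + 5 - m) - 1) * (K + 2).choose (m - 2) : ℕ) : ℝ)) := by
    intro m hm
    simp only [mem_Icc] at hm
    have h1 : ∀ s ∈ Icc 1 m, (s : ℝ) * ((s : ℝ) - 1) * Ptilde (K + 5) s (s + m)
        = (2 / 3 : ℝ) ^ (K + 4) * (1 / 2 : ℝ) ^ m
            * ((s * (s - 1) * (K + 5 - m).choose s * (m - 1).choose (s - 1) : ℕ) : ℝ) := by
      intro s hs
      simp only [mem_Icc] at hs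
      rw [Ptilde_eq (K + 5) s m (by omega) (by omega), show K + 5 - 1 = K + 4 from rfl]
      push_cast [Nat.cast_sub (show 1 ≤ s by omega)]
      ring
    rw [Finset.sum_congr rfl h1, ← Finset.mul_sum, ← Nat.cast_sum]
    rw [innerF (K + 5 - m) m hm.1, show (K + 5 - m) + m - 3 = K + 2 by omega]
    ring
  rw [Finset.sum_congr rfl step, ← Finset.mul_sum]
  rw [show Icc 2 (K + 5) = Ico 2 (K + 6) by rw [← Finset.Ico_add_one_right_eq_Icc]; rfl,
    Finset.sum_Ico_eq_sum_range, show K + 6 - 2 = K + 4 from rfl]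
  have h4 : ∀ i ∈ range (K + 4),
      (1 / 2 : ℝ) ^ (2 + i)
          * (((K + 5 - (2 + i)) * ((K + 5 - (2 + i)) - 1) * (K + 2).choose (2 + i - 2) : ℕ) : ℝ)
        = (1 / 4 : ℝ) * ((((K + 3 - i) * ((K + 2 - i) * (K + 2).choose i) : ℕ)) : ℝ)
            * (1 / 2 : ℝ) ^ i := by
    intro i _
    rw [show 2 + i - 2 = i by omega, show K + 5 - (2 + i) = K + 3 - i by omega,
      show K + 3 - i - 1 = K + 2 - i by omega, pow_add]
    push_cast
    ring
  rw [Finset.sum_congr rfl h4]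
  have h5 : ∀ i ∈ range (K + 4),
      (1 / 4 : ℝ) * ((((K + 3 - i) * ((K + 2 - i) * (K + 2).choose i) : ℕ)) : ℝ)
          * (1 / 2 : ℝ) ^ i
        = ((K : ℝ) + 2) * ((K : ℝ) + 1) / 4 * ((K.choose i : ℝ) * (1 / 2 : ℝ) ^ i)
            + ((K : ℝ) + 2) / 2 * (((K + 1).choose i : ℝ) * (1 / 2 : ℝ) ^ i) := by
    intro i _
    rw [lem3 K i]
    push_cast
    ring
  rw [Finset.sum_congr rfl h5, Finset.sum_add_distrib, ← Finset.mul_sum, ← Finset.mul_sum,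
    geom K (K + 4) (by omega), geom (K + 1) (K + 4) (by omega)]
  have hp1 := pow23 K
  have hp2 := pow23 (K + 1)
  rw [show K + 4 = K + 4 from rfl]
  have e1 : (2 / 3 : ℝ) ^ (K + 4) = (2 / 3 : ℝ) ^ K * (2 / 3 : ℝ) ^ 4 := by rw [← pow_add]
  have e2 : (3 / 2 : ℝ) ^ (K + 1) = (3 / 2 : ℝ) ^ K * (3 / 2 : ℝ) := by rw [← pow_succ]
  rw [e1, e2]
  linear_combination ((2 / 3 : ℝ) ^ 4 * (((K : ℝ) + 2) * ((K : ℝ) + 1) / 4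
    + ((K : ℝ) + 2) / 2 * (3 / 2))) * hp1

/-- recursive asymptotic relation for the second factorial moment
of the number of dimers. -/
theorem dimer_second_factorial_recursion :
    Filter.Tendsto
      (fun N : ℕ =>
        dimerSecondFactorial N
          - ((N : ℝ) * ((N : ℝ) - 1) / 9
              - 2 * ((N : ℝ) - 1)
                  * (lengthMean N - 4 / 3 * lengthMean (N - 1) + 4 / 9 * lengthMean (N - 2))
              + lengthSecondFactorial N - 4 / 3 * lengthSecondFactorial (N - 1)
              + 4 / 9 * lengthSecondFactorial (N - 2)))
      Filter.atTop (nhds 0) := by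
  refine Filter.Tendsto.congr' ?_ tendsto_const_nhds
  rw [Filter.EventuallyEq, Filter.eventually_atTop]
  refine ⟨7, fun N hN => ?_⟩
  obtain ⟨J, rfl⟩ : ∃ J, N = J + 7 := ⟨N - 7, by omega⟩
  have e1 : J + 7 - 1 = (J + 1) + 5 := by omega
  have e2 : J + 7 - 2 = J + 5 := by omega
  rw [e1, e2, show J + 7 = (J + 2) + 5 by omega]
  rw [Fform, Mform, Mform, Mform, Gform, Gform, Gform]
  push_cast
  ring
end
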